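/- arXiv:1402.3610 — 2 statements merged into one kernel-verified Lean document; each statement's English description precedes it below -/
import Mathlib

section
/- If f is a budget-balanced distribution rule for a welfare function W = (𝒯, Q) (with W(∅) = 0) on a finite player set N that guarantees the existence of a pure Nash equilibrium in all games in G(N, f, W), then the recursively defined basis distribution rules {f^T}_{T∈𝒯} satisfy f(i, S) = Σ_{T∈𝒯} q_T · f^T(i, S) for all S ⊆ N and all i ∈ S. -/
open scoped BigOperators Classical

namespace CostSharing

/-- A welfare sharing game on player set `N`: a finite resource set, a nonempty
finite action set (a collection of subsets of resources) for each player, and a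
local welfare function at each resource. -/
structure Game (N : Type) [Fintype N] [DecidableEq N] where
  R : Type
  [finR : Fintype R]
  [decR : DecidableEq R]
  act : N → Finset (Finset R)
  act_nonempty : ∀ i, (act i).Nonempty
  Wr : R → Finset N → ℝ

attribute [instance] Game.finR Game.decR

variable {N : Type} [Fintype N] [DecidableEq N]

/-- `{a}_r`: the set of players choosing resource `r` in profile `a`. -/
def playersAt {G : Game N} (a : N → Finset G.R) (r : G.R) : Finset N :=
  Finset.univ.filter fun i => r ∈ a i

/-- Player `i`'s utility, where `fD` assigns to each local welfare function its
local distribution rule (so resources with identical welfare functions have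
identical distribution rules). -/
noncomputable def utility (G : Game N) (fD : (Finset N → ℝ) → N → Finset N → ℝ)
    (a : N → Finset G.R) (i : N) : ℝ :=
  ∑ r ∈ a i, fD (G.Wr r) i (playersAt a r)

/-- Pure Nash equilibrium. -/
def IsPNE (G : Game N) (fD : (Finset N → ℝ) → N → Finset N → ℝ)
    (a : N → Finset G.R) : Prop :=
  (∀ i, a i ∈ G.act i) ∧
    ∀ i : N, ∀ b ∈ G.act i,
      utility G fD (Function.update a i b) i ≤ utility G fD a i

/-- Every game in the class `G(N, f^𝕎, 𝕎)` possesses a pure Nash equilibrium. -/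
def GuaranteesPNE (𝕎 : Set (Finset N → ℝ))
    (fD : (Finset N → ℝ) → N → Finset N → ℝ) : Prop :=
  ∀ G : Game N, (∀ r : G.R, G.Wr r ∈ 𝕎) → ∃ a, IsPNE G fD a

/-- Every game in the single-welfare-function class `G(N, f, W)` possesses a
pure Nash equilibrium. -/
def GuaranteesPNE1 (W : Finset N → ℝ) (f : N → Finset N → ℝ) : Prop :=
  ∀ G : Game N, (∀ r : G.R, G.Wr r = W) → ∃ a, IsPNE G (fun _ => f) a

/-- A distribution rule allocates nothing to absent players. -/
def DistRule (f : N → Finset N → ℝ) : Prop :=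
  ∀ (i : N) (S : Finset N), i ∉ S → f i S = 0

/-- Budget balance: `∑_{i∈S} f(i,S) = W(S)`. -/
def BudgetBalanced (W : Finset N → ℝ) (f : N → Finset N → ℝ) : Prop :=
  ∀ S : Finset N, ∑ i ∈ S, f i S = W S

/-- The inclusion (unanimity) welfare function `W^T`. -/
def unanimity (T S : Finset N) : ℝ := if T ⊆ S then 1 else 0

/-- The basis coefficient `q^W_T` of `W` on the unanimity basis (Möbius inversion). -/
def coeff (W : Finset N → ℝ) (T : Finset N) : ℝ :=
  ∑ R ∈ T.powerset, (-1 : ℝ) ^ (T.card - R.card) * W R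

/-- The support `𝒯^W` of the basis representation of `W`. -/
noncomputable def supp (W : Finset N → ℝ) : Finset (Finset N) :=
  Finset.univ.filter fun T => coeff W T ≠ 0

/-- `𝒯^W(S)`: the contributing coalitions within `S`. -/
noncomputable def suppIn (W : Finset N → ℝ) (S : Finset N) : Finset (Finset N) :=
  (supp W).filter (· ⊆ S)

/-- `N^W(S)`: the contributing players within `S`. -/
noncomputable def contributors (W : Finset N → ℝ) (S : Finset N) : Finset N :=
  (suppIn W S).biUnion id

/-- A weight system `ω = (λ, Σ)`: strictly positive player weights together with
an ordered partition of `N`. -/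
structure WeightSystem (N : Type) [Fintype N] [DecidableEq N] where
  lam : N → ℝ
  lam_pos : ∀ i, 0 < lam i
  m : ℕ
  part : Fin m → Finset N
  part_nonempty : ∀ k, (part k).Nonempty
  part_disjoint : ∀ k l, k ≠ l → Disjoint (part k) (part l)
  part_covers : ∀ i : N, ∃ k, i ∈ part k

/-- The index of the block of the ordered partition containing player `i`. -/
noncomputable def WeightSystem.idx (ω : WeightSystem N) (i : N) : Fin ω.m :=
  (ω.part_covers i).choose

/-- `T̄ = T ∩ S_k` where `k = min {j : S_j ∩ T ≠ ∅}`. -/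
noncomputable def WeightSystem.bar (ω : WeightSystem N) (T : Finset N) : Finset N :=
  T.filter fun i => ∀ j ∈ T, ω.idx i ≤ ω.idx j

/-- The generalized weighted Shapley value basis rule `f^T_{GWSV}[ω]`. -/
noncomputable def fGWSVbasis (ω : WeightSystem N) (T : Finset N) (i : N)
    (S : Finset N) : ℝ :=
  if i ∈ ω.bar T ∧ T ⊆ S then ω.lam i / ∑ j ∈ ω.bar T, ω.lam j else 0

/-- The generalized weighted marginal contribution basis rule `f^T_{GWMC}[ω]`. -/
noncomputable def fGWMCbasis (ω : WeightSystem N) (T : Finset N) (i : N)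
    (S : Finset N) : ℝ :=
  if i ∈ ω.bar T ∧ T ⊆ S then ω.lam i else 0

/-- The generalized weighted Shapley value distribution rule `f^{W'}_{GWSV}[ω]`. -/
noncomputable def fGWSV (ω : WeightSystem N) (W' : Finset N → ℝ) (i : N)
    (S : Finset N) : ℝ :=
  ∑ T ∈ supp W', coeff W' T * fGWSVbasis ω T i S

/-- The generalized weighted marginal contribution distribution rule
`f^{W''}_{GWMC}[ω]`. -/
noncomputable def fGWMC (ω : WeightSystem N) (W'' : Finset N → ℝ) (i : N)
    (S : Finset N) : ℝ :=
  ∑ T ∈ supp W'', coeff W'' T * fGWMCbasis ω T i S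

/-- The recursively defined basis distribution rules `f^T` of a distribution
rule `f` for `W` (recursion along the min-partition of `(𝒯^W, ⊆)`). -/
noncomputable def basisRule (W : Finset N → ℝ) (f : N → Finset N → ℝ)
    (T : Finset N) (i : N) (S : Finset N) : ℝ :=
  if T ⊆ S then
    (1 / coeff W T) *
      (f i T - ∑ T' ∈ ((suppIn W T).erase T).attach,
        coeff W T'.1 * basisRule W f T'.1 i S)
  else 0
termination_by T.card
decreasing_by
  have h := T'.2
  simp only [Finset.mem_erase, suppIn, Finset.mem_filter] at h
  exact Finset.card_lt_card (Finset.ssubset_iff_subset_ne.mpr ⟨h.2.2, h.1⟩)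

section Algebra

variable {N : Type} [Fintype N] [DecidableEq N]

lemma coeff_insert (g : Finset N → ℝ) (a : N) (T : Finset N) (ha : a ∉ T) :
    coeff g (insert a T) = coeff (fun U => g (insert a U)) T - coeff g T := by
  unfold coeff
  rw [Finset.sum_powerset_insert ha, Finset.card_insert_of_notMem ha]
  have h1 : ∀ R ∈ T.powerset, (-1 : ℝ) ^ (T.card + 1 - R.card) * g R
      = -((-1 : ℝ) ^ (T.card - R.card) * g R) := by
    intro R hR
    have hle : R.card ≤ T.card := Finset.card_le_card (Finset.mem_powerset.mp hR)
    have : T.card + 1 - R.card = (T.card - R.card) + 1 := by omega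
    rw [this, pow_succ]
    ring
  have h2 : ∀ R ∈ T.powerset, (-1 : ℝ) ^ (T.card + 1 - (insert a R).card) * g (insert a R)
      = (-1 : ℝ) ^ (T.card - R.card) * g (insert a R) := by
    intro R hR
    have haR : a ∉ R := fun h => ha (Finset.mem_powerset.mp hR h)
    rw [Finset.card_insert_of_notMem haR]
    congr 2
    omega
  rw [Finset.sum_congr rfl h1, Finset.sum_congr rfl h2]
  simp only [Finset.sum_neg_distrib]
  ring

lemma sum_coeff (g : Finset N → ℝ) (S : Finset N) :
    ∑ T ∈ S.powerset, coeff g T = g S := by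
  induction S using Finset.induction_on generalizing g with
  | empty => simp [coeff]
  | @insert a S ha ih =>
    rw [Finset.sum_powerset_insert ha]
    have : ∀ T ∈ S.powerset, coeff g (insert a T)
        = coeff (fun U => g (insert a U)) T - coeff g T := by
      intro T hT
      exact coeff_insert g a T (fun h => ha (Finset.mem_powerset.mp hT h))
    rw [Finset.sum_congr rfl this, Finset.sum_sub_distrib, ih g,
      ih (fun U => g (insert a U))]
    ring

end Algebra
set_option linter.unusedSectionVars false

section Algebra2

variable {N : Type} [Fintype N] [DecidableEq N]

lemma coeff_f_eq_zero_of_not_mem {f : N → Finset N → ℝ} (hdist : DistRule f)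
    {i : N} {T : Finset N} (hi : i ∉ T) : coeff (f i) T = 0 := by
  unfold coeff
  refine Finset.sum_eq_zero fun R hR => ?_
  rw [hdist i R (fun h => hi (Finset.mem_powerset.mp hR h)), mul_zero]

lemma coeff_W_eq_sum {W : Finset N → ℝ} {f : N → Finset N → ℝ}
    (hdist : DistRule f) (hbb : BudgetBalanced W f) (T : Finset N) :
    coeff W T = ∑ p : N, coeff (f p) T := by
  unfold coeff
  rw [Finset.sum_comm]
  refine Finset.sum_congr rfl fun R hR => ?_
  rw [← (hbb R), Finset.mul_sum]
  rw [← Finset.sum_subset (Finset.subset_univ R)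
    (fun p _ hp => by rw [hdist p R hp, mul_zero])]

/-- if all off-support Möbius coefficients of `f i` vanish, the basis rules
recover them on support. -/
lemma basisRule_eq_coeff {W : Finset N → ℝ} {f : N → Finset N → ℝ}
    (hdist : DistRule f)
    (hkey : ∀ T : Finset N, coeff W T = 0 → ∀ p : N, coeff (f p) T = 0) :
    ∀ (T : Finset N), T ∈ supp W → ∀ (p : N) (S : Finset N), T ⊆ S →
      coeff W T * basisRule W f T p S = coeff (f p) T := by
  intro T
  induction T using Finset.strongInductionOn with
  | _ T ih =>
    intro hT p S hTS
    have hq : coeff W T ≠ 0 := by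
      simpa [supp] using hT
    rw [basisRule, if_pos hTS]
    rw [Finset.sum_attach (((suppIn W T).erase T))
      (fun T' => coeff W T' * basisRule W f T' p S)]
    have hsum : ∑ T' ∈ (suppIn W T).erase T, coeff W T' * basisRule W f T' p S
        = ∑ T' ∈ (suppIn W T).erase T, coeff (f p) T' := by
      refine Finset.sum_congr rfl fun T' hT' => ?_
      simp only [Finset.mem_erase, suppIn, Finset.mem_filter] at hT'
      have hss : T' ⊂ T := Finset.ssubset_iff_subset_ne.mpr ⟨hT'.2.2, hT'.1⟩
      exact ih T' hss hT'.2.1 p S (hT'.2.2.trans hTS)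
    rw [hsum]
    have hfpT : f p T = ∑ T' ∈ suppIn W T, coeff (f p) T' := by
      rw [← sum_coeff (f p) T]
      refine (Finset.sum_subset ?_ ?_).symm
      · intro x hx
        simp only [suppIn, Finset.mem_filter] at hx
        exact Finset.mem_powerset.mpr hx.2
      · intro x hx hx2
        simp only [suppIn, Finset.mem_filter] at hx2
        push_neg at hx2
        by_cases hxs : x ∈ supp W
        · exact absurd (hx2 hxs) (by simpa using Finset.mem_powerset.mp hx)
        · exact hkey x (by simpa [supp] using hxs) p
    have hTin : T ∈ suppIn W T := by
      simp only [suppIn, Finset.mem_filter]; exact ⟨hT, Finset.Subset.refl T⟩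
    rw [← Finset.add_sum_erase _ _ hTin] at hfpT
    field_simp [hfpT]
    linarith

lemma basisRule_of_not_subset {W : Finset N → ℝ} {f : N → Finset N → ℝ}
    {T S : Finset N} (h : ¬ T ⊆ S) (p : N) : basisRule W f T p S = 0 := by
  rw [basisRule, if_neg h]

lemma final_of_key {W : Finset N → ℝ} {f : N → Finset N → ℝ}
    (hdist : DistRule f)
    (hkey : ∀ T : Finset N, coeff W T = 0 → ∀ p : N, coeff (f p) T = 0) :
    ∀ S : Finset N, ∀ i ∈ S,
      f i S = ∑ T ∈ supp W, coeff W T * basisRule W f T i S := by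
  intro S i _
  have h1 : ∑ T ∈ supp W, coeff W T * basisRule W f T i S
      = ∑ T ∈ suppIn W S, coeff W T * basisRule W f T i S := by
    refine (Finset.sum_subset (Finset.filter_subset _ _) ?_).symm
    intro T hT hT2
    simp only [suppIn, Finset.mem_filter] at hT2
    push_neg at hT2
    rw [basisRule_of_not_subset (hT2 hT), mul_zero]
  rw [h1]
  have h2 : ∑ T ∈ suppIn W S, coeff W T * basisRule W f T i S
      = ∑ T ∈ suppIn W S, coeff (f i) T := by
    refine Finset.sum_congr rfl fun T hT => ?_
    simp only [suppIn, Finset.mem_filter] at hT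
    exact basisRule_eq_coeff hdist hkey T hT.1 i S hT.2
  rw [h2]
  rw [← sum_coeff (f i) S]
  refine (Finset.sum_subset ?_ ?_).symm
  · intro x hx
    simp only [suppIn, Finset.mem_filter] at hx
    exact Finset.mem_powerset.mpr hx.2
  · intro x hx hx2
    simp only [suppIn, Finset.mem_filter] at hx2
    push_neg at hx2
    by_cases hxs : x ∈ supp W
    · exact absurd (hx2 hxs) (by simpa using Finset.mem_powerset.mp hx)
    · exact hkey x (by simpa [supp] using hxs) i

end Algebra2
section Gadget

variable {N : Type} [Fintype N] [DecidableEq N]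

/-- Resource descriptors for the matching-pennies gadget. -/
abbrev Res (N : Type) [Fintype N] [DecidableEq N] : Type := Finset N × Fin 3 × Fin 2

variable (S : Finset N) (i j : N)

def spos (B : Finset N) : Prop := Even (S.card - B.card)

def valid : Res N → Prop := fun r =>
  r.1 ⊆ S ∧ ((r.2.1 = 0 ∧ i ∈ r.1 ∧ j ∈ r.1)
    ∨ (r.2.1 = 1 ∧ i ∈ r.1 ∧ r.2.2 = 0)
    ∨ (r.2.1 = 2 ∧ j ∈ r.1 ∧ r.2.2 = 0))

noncomputable def XA : Finset (Res N) := Finset.univ.filter fun r =>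
  valid S i j r ∧ ((r.2.1 = 0 ∧ spos S r.1)
    ∨ (r.2.1 = 1 ∧ (spos S r.1 ↔ j ∉ r.1))
    ∨ (r.2.1 = 2 ∧ i ∈ r.1))

noncomputable def YA : Finset (Res N) := Finset.univ.filter fun r =>
  valid S i j r ∧ ((r.2.1 = 0 ∧ ¬ spos S r.1)
    ∨ (r.2.1 = 1 ∧ ¬ (spos S r.1 ↔ j ∉ r.1))
    ∨ (r.2.1 = 2 ∧ i ∈ r.1))

noncomputable def XB : Finset (Res N) := Finset.univ.filter fun r =>
  valid S i j r ∧ (r.2.1 = 0 ∨ (r.2.1 = 1 ∧ j ∈ r.1))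

noncomputable def YB : Finset (Res N) := Finset.univ.filter fun r =>
  valid S i j r ∧ ((r.2.1 = 1 ∧ j ∈ r.1) ∨ r.2.1 = 2)

noncomputable def CK (k : N) : Finset (Res N) := Finset.univ.filter fun r =>
  valid S i j r ∧ k ∈ r.1 ∧ k ≠ i ∧ k ≠ j

/-- The gadget game. -/
noncomputable def Gm (W : Finset N → ℝ) : Game N where
  R := Res N
  act := fun p => if p = i then {XA S i j, YA S i j}
    else if p = j then {XB S i j, YB S i j} else {CK S i j p}
  act_nonempty := by
    intro p
    split_ifs <;> simp
  Wr := fun _ => W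

attribute [reducible] Gm

lemma mem_c0 {B : Finset N} {k : Fin 2} :
    (((B, 0, k) : Res N) ∈ XA S i j ↔ (B ⊆ S ∧ i ∈ B ∧ j ∈ B) ∧ spos S B)
    ∧ (((B, 0, k) : Res N) ∈ YA S i j ↔ (B ⊆ S ∧ i ∈ B ∧ j ∈ B) ∧ ¬ spos S B)
    ∧ (((B, 0, k) : Res N) ∈ XB S i j ↔ (B ⊆ S ∧ i ∈ B ∧ j ∈ B))
    ∧ (((B, 0, k) : Res N) ∈ YB S i j ↔ False) := by
  refine ⟨?_, ?_, ?_, ?_⟩ <;>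
    simp only [XA, YA, XB, YB, Finset.mem_filter] <;> simp [valid] <;> tauto

lemma mem_c1 {B : Finset N} {k : Fin 2} :
    (((B, 1, k) : Res N) ∈ XA S i j ↔ (B ⊆ S ∧ i ∈ B ∧ k = 0) ∧ (spos S B ↔ j ∉ B))
    ∧ (((B, 1, k) : Res N) ∈ YA S i j ↔ (B ⊆ S ∧ i ∈ B ∧ k = 0) ∧ ¬ (spos S B ↔ j ∉ B))
    ∧ (((B, 1, k) : Res N) ∈ XB S i j ↔ (B ⊆ S ∧ i ∈ B ∧ k = 0) ∧ j ∈ B)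
    ∧ (((B, 1, k) : Res N) ∈ YB S i j ↔ (B ⊆ S ∧ i ∈ B ∧ k = 0) ∧ j ∈ B) := by
  refine ⟨?_, ?_, ?_, ?_⟩ <;>
    simp only [XA, YA, XB, YB, Finset.mem_filter] <;> simp [valid] <;> tauto

lemma mem_c2 {B : Finset N} {k : Fin 2} :
    (((B, 2, k) : Res N) ∈ XA S i j ↔ (B ⊆ S ∧ j ∈ B ∧ k = 0) ∧ i ∈ B)
    ∧ (((B, 2, k) : Res N) ∈ YA S i j ↔ (B ⊆ S ∧ j ∈ B ∧ k = 0) ∧ i ∈ B)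
    ∧ (((B, 2, k) : Res N) ∈ XB S i j ↔ False)
    ∧ (((B, 2, k) : Res N) ∈ YB S i j ↔ (B ⊆ S ∧ j ∈ B ∧ k = 0)) := by
  refine ⟨?_, ?_, ?_, ?_⟩ <;>
    simp only [XA, YA, XB, YB, Finset.mem_filter] <;> simp [valid] <;> tauto

lemma mem_CK {r : Res N} {k : N} :
    r ∈ CK S i j k ↔ valid S i j r ∧ k ∈ r.1 ∧ k ≠ i ∧ k ≠ j := by
  simp [CK]

lemma playersAt_eq (W : Finset N → ℝ) (a : N → Finset (Res N))
    (hij : i ≠ j)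
    (hk : ∀ p, p ≠ i → p ≠ j → a p = CK S i j p) (r : Res N) :
    playersAt (G := Gm S i j W) a r =
      ((if valid S i j r then (r.1.erase i).erase j else ∅)
        ∪ (if r ∈ a i then {i} else ∅)) ∪ (if r ∈ a j then {j} else ∅) := by
  ext p
  simp only [playersAt, Finset.mem_filter, Finset.mem_univ, true_and,
    Finset.mem_union]
  by_cases hpi : p = i
  · subst hpi
    constructor
    · intro h
      refine Or.inl (Or.inr ?_)
      simp [show r ∈ a p from h]
    · rintro ((h | h) | h)
      · split_ifs at h with hv
        · exact absurd (Finset.mem_erase.mp ((Finset.mem_erase.mp h).2)).1 (by simp)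
        · simp at h
      · split_ifs at h with hv
        · exact hv
        · simp at h
      · split_ifs at h with hv
        · exact absurd (Finset.mem_singleton.mp h) hij
        · simp at h
  · by_cases hpj : p = j
    · subst hpj
      constructor
      · intro h
        refine Or.inr ?_
        simp [show r ∈ a p from h]
      · rintro ((h | h) | h)
        · split_ifs at h with hv
          · exact absurd (Finset.mem_erase.mp h).1 (by simp)
          · simp at h
        · split_ifs at h with hv
          · exact absurd (Finset.mem_singleton.mp h) (Ne.symm hij)
          · simp at h
        · split_ifs at h with hv
          · exact hv
          · simp at h
    · rw [hk p hpi hpj]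
      refine (mem_CK S i j).trans ?_
      constructor
      · rintro ⟨hv, hmem, -, -⟩
        refine Or.inl (Or.inl ?_)
        rw [if_pos hv]
        exact Finset.mem_erase.mpr ⟨hpj, Finset.mem_erase.mpr ⟨hpi, hmem⟩⟩
      · rintro ((h | h) | h)
        · split_ifs at h with hv
          · exact ⟨hv, (Finset.mem_erase.mp ((Finset.mem_erase.mp h).2)).2, hpi, hpj⟩
          · simp at h
        · split_ifs at h with hv <;> simp at h
          exact absurd h hpi
        · split_ifs at h with hv <;> simp at h
          exact absurd h hpj

end Gadget
section Gadget2

variable {N : Type} [Fintype N] [DecidableEq N]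
variable (S : Finset N) (i j : N)

lemma valid_c0 {B : Finset N} {k : Fin 2} :
    valid S i j ((B, 0, k) : Res N) ↔ B ⊆ S ∧ i ∈ B ∧ j ∈ B := by
  simp [valid]

lemma valid_c1 {B : Finset N} {k : Fin 2} :
    valid S i j ((B, 1, k) : Res N) ↔ B ⊆ S ∧ i ∈ B ∧ k = 0 := by
  simp [valid]

lemma valid_c2 {B : Finset N} {k : Fin 2} :
    valid S i j ((B, 2, k) : Res N) ↔ B ⊆ S ∧ j ∈ B ∧ k = 0 := by
  simp [valid]

lemma u_all {B : Finset N} (hi : i ∈ B) (hj : j ∈ B) (hij : i ≠ j) :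
    (((B.erase i).erase j ∪ {i}) ∪ {j}) = B := by
  ext p
  simp only [Finset.mem_union, Finset.mem_erase, Finset.mem_singleton]
  constructor
  · rintro ((⟨-, -, h⟩ | rfl) | rfl) <;> first | exact h | exact hi | exact hj
  · intro h
    by_cases hp1 : p = i
    · exact Or.inl (Or.inr hp1)
    by_cases hp2 : p = j
    · exact Or.inr hp2
    exact Or.inl (Or.inl ⟨hp2, hp1, h⟩)

lemma u_i {B : Finset N} (hi : i ∈ B) (hij : i ≠ j) :
    ((B.erase i).erase j ∪ {i}) = B.erase j := by
  ext p
  simp only [Finset.mem_union, Finset.mem_erase, Finset.mem_singleton]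
  constructor
  · rintro (⟨h1, -, h3⟩ | rfl)
    · exact ⟨h1, h3⟩
    · exact ⟨hij, hi⟩
  · rintro ⟨h1, h2⟩
    by_cases hp : p = i
    · exact Or.inr hp
    · exact Or.inl ⟨h1, hp, h2⟩

lemma u_j {B : Finset N} (hj : j ∈ B) (hij : i ≠ j) :
    ((B.erase i).erase j ∪ {j}) = B.erase i := by
  ext p
  simp only [Finset.mem_union, Finset.mem_erase, Finset.mem_singleton]
  constructor
  · rintro (⟨-, h2, h3⟩ | rfl)
    · exact ⟨h2, h3⟩
    · exact ⟨Ne.symm hij, hj⟩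
  · rintro ⟨h1, h2⟩
    by_cases hp : p = j
    · exact Or.inr hp
    · exact Or.inl ⟨hp, h1, h2⟩

lemma u_base {B : Finset N} (hi : i ∉ B) :
    (B.erase i).erase j = B.erase j := by
  rw [Finset.erase_eq_of_notMem hi]

lemma u_basej {B : Finset N} (hj : j ∉ B) :
    (B.erase i).erase j = B.erase i := by
  rw [Finset.erase_eq_of_notMem (fun h => hj (Finset.mem_erase.mp h).2)]

/-- group as seen through a profile -/
noncomputable def P (a : N → Finset (Res N)) (r : Res N) : Finset N :=
  ((if valid S i j r then (r.1.erase i).erase j else ∅)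
    ∪ (if r ∈ a i then {i} else ∅)) ∪ (if r ∈ a j then {j} else ∅)

lemma utility_eq (W : Finset N → ℝ) (f : N → Finset N → ℝ)
    (a : N → Finset (Res N)) (hij : i ≠ j)
    (hk : ∀ p, p ≠ i → p ≠ j → a p = CK S i j p) (p : N)
    (X : Finset (Res N)) (hp : a p = X) :
    utility (Gm S i j W) (fun _ => f) a p
      = ∑ r : Res N, if r ∈ X then f p (P S i j a r) else 0 := by
  unfold utility
  have h1 : ∀ r : Res N, playersAt (G := Gm S i j W) a r = P S i j a r := by
    intro r
    rw [playersAt_eq S i j W a hij hk r, P]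
  calc ∑ r ∈ a p, (fun _ => f) ((Gm S i j W).Wr r) p (playersAt (G := Gm S i j W) a r)
      = ∑ r ∈ X, f p (P S i j a r) := by
        rw [hp]
        exact Finset.sum_congr rfl fun r _ => by rw [h1]
    _ = ∑ r : Res N, if r ∈ X then f p (P S i j a r) else 0 := by
        rw [Finset.sum_ite_mem, Finset.univ_inter]

end Gadget2
section Gadget3

variable {N : Type} [Fintype N] [DecidableEq N]
variable (S : Finset N) (i j : N)

lemma mem_XA_c0 {B : Finset N} {k : Fin 2} :
    (((B, 0, k) : Res N) ∈ XA S i j ↔ (B ⊆ S ∧ i ∈ B ∧ j ∈ B) ∧ spos S B) := by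
  simp only [XA, Finset.mem_filter]; simp [valid]; try tauto

lemma mem_YA_c0 {B : Finset N} {k : Fin 2} :
    (((B, 0, k) : Res N) ∈ YA S i j ↔ (B ⊆ S ∧ i ∈ B ∧ j ∈ B) ∧ ¬ spos S B) := by
  simp only [YA, Finset.mem_filter]; simp [valid]; try tauto

lemma mem_XB_c0 {B : Finset N} {k : Fin 2} :
    (((B, 0, k) : Res N) ∈ XB S i j ↔ (B ⊆ S ∧ i ∈ B ∧ j ∈ B)) := by
  simp only [XB, Finset.mem_filter]; simp [valid]; try tauto

lemma mem_YB_c0 {B : Finset N} {k : Fin 2} :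
    (((B, 0, k) : Res N) ∈ YB S i j ↔ False) := by
  simp only [YB, Finset.mem_filter]; simp [valid]; try tauto

lemma mem_XA_c1 {B : Finset N} {k : Fin 2} :
    (((B, 1, k) : Res N) ∈ XA S i j ↔ (B ⊆ S ∧ i ∈ B ∧ k = 0) ∧ (spos S B ↔ j ∉ B)) := by
  simp only [XA, Finset.mem_filter]; simp [valid]; try tauto

lemma mem_YA_c1 {B : Finset N} {k : Fin 2} :
    (((B, 1, k) : Res N) ∈ YA S i j ↔ (B ⊆ S ∧ i ∈ B ∧ k = 0) ∧ ¬ (spos S B ↔ j ∉ B)) := by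
  simp only [YA, Finset.mem_filter]; simp [valid]; try tauto

lemma mem_XB_c1 {B : Finset N} {k : Fin 2} :
    (((B, 1, k) : Res N) ∈ XB S i j ↔ (B ⊆ S ∧ i ∈ B ∧ k = 0) ∧ j ∈ B) := by
  simp only [XB, Finset.mem_filter]; simp [valid]; try tauto

lemma mem_YB_c1 {B : Finset N} {k : Fin 2} :
    (((B, 1, k) : Res N) ∈ YB S i j ↔ (B ⊆ S ∧ i ∈ B ∧ k = 0) ∧ j ∈ B) := by
  simp only [YB, Finset.mem_filter]; simp [valid]; try tauto

lemma mem_XA_c2 {B : Finset N} {k : Fin 2} :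
    (((B, 2, k) : Res N) ∈ XA S i j ↔ (B ⊆ S ∧ j ∈ B ∧ k = 0) ∧ i ∈ B) := by
  simp only [XA, Finset.mem_filter]; simp [valid]; try tauto

lemma mem_YA_c2 {B : Finset N} {k : Fin 2} :
    (((B, 2, k) : Res N) ∈ YA S i j ↔ (B ⊆ S ∧ j ∈ B ∧ k = 0) ∧ i ∈ B) := by
  simp only [YA, Finset.mem_filter]; simp [valid]; try tauto

lemma mem_XB_c2 {B : Finset N} {k : Fin 2} :
    (((B, 2, k) : Res N) ∈ XB S i j ↔ False) := by
  simp only [XB, Finset.mem_filter]; simp [valid]; try tauto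

lemma mem_YB_c2 {B : Finset N} {k : Fin 2} :
    (((B, 2, k) : Res N) ∈ YB S i j ↔ (B ⊆ S ∧ j ∈ B ∧ k = 0)) := by
  simp only [YB, Finset.mem_filter]; simp [valid]; try tauto

end Gadget3
section Gadget4

variable {N : Type} [Fintype N] [DecidableEq N]
variable (S : Finset N) (i j : N)

lemma fin2_one_ne_zero : (((1:Fin 2) = 0) ↔ False) := by decide

lemma u_ej {B : Finset N} (hj : j ∈ B) : B.erase j ∪ {j} = B := by
  rw [Finset.union_comm, ← Finset.insert_eq, Finset.insert_erase hj]

lemma u_ei {B : Finset N} (hi : i ∈ B) : B.erase i ∪ {i} = B := by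
  rw [Finset.union_comm, ← Finset.insert_eq, Finset.insert_erase hi]

lemma filter_subset_powerset :
    (Finset.univ.filter (fun B : Finset N => B ⊆ S)) = S.powerset := by
  ext B; simp

lemma delta_iX (W : Finset N → ℝ) (f : N → Finset N → ℝ) (hdist : DistRule f)
    (hij : i ≠ j)
    (a1 a2 : N → Finset (Res N))
    (h1i : a1 i = XA S i j) (h2i : a2 i = YA S i j)
    (h1j : a1 j = XB S i j) (h2j : a2 j = XB S i j)
    (h1k : ∀ p, p ≠ i → p ≠ j → a1 p = CK S i j p)
    (h2k : ∀ p, p ≠ i → p ≠ j → a2 p = CK S i j p) :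
    utility (Gm S i j W) (fun _ => f) a1 i - utility (Gm S i j W) (fun _ => f) a2 i
      = coeff (f i) S := by
  rw [utility_eq S i j W f a1 hij h1k i _ h1i,
      utility_eq S i j W f a2 hij h2k i _ h2i,
      ← Finset.sum_sub_distrib]
  simp only [P, h1i, h1j, h2i, h2j]
  rw [Fintype.sum_prod_type]
  simp only [Fintype.sum_prod_type]
  trans (∑ B : Finset N, if B ⊆ S then (-1:ℝ)^(S.card - B.card) * f i B else 0)
  · refine Finset.sum_congr rfl fun B _ => ?_
    rw [Fin.sum_univ_three]
    simp only [Fin.sum_univ_two]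
    by_cases hBS : B ⊆ S
    · rw [if_pos hBS]
      by_cases hiB : i ∈ B
      · by_cases hjB : j ∈ B
        · by_cases hsp : spos S B
          · rw [Even.neg_one_pow hsp]
            simp only [mem_XA_c0, mem_YA_c0, mem_XB_c0, mem_XA_c1, mem_YA_c1,
              mem_XB_c1, mem_XA_c2, mem_YA_c2, mem_XB_c2, valid_c0, valid_c1, valid_c2,
              hBS, hiB, hjB, hsp, fin2_one_ne_zero, eq_self_iff_true,
              iff_true, true_iff, iff_false, false_iff, not_true, not_false_iff,
              true_and, and_true, false_and, and_false, if_true, if_false,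
              not_not, Finset.union_empty, Finset.empty_union,
               u_all i j hiB hjB hij, u_i i j hiB hij, u_j i j hjB hij, u_ej j hjB, u_ei i hiB]
            ring
          · rw [Odd.neg_one_pow (Nat.not_even_iff_odd.mp hsp)]
            simp only [mem_XA_c0, mem_YA_c0, mem_XB_c0, mem_XA_c1, mem_YA_c1,
              mem_XB_c1, mem_XA_c2, mem_YA_c2, mem_XB_c2, valid_c0, valid_c1, valid_c2,
              hBS, hiB, hjB, hsp, fin2_one_ne_zero, eq_self_iff_true,
              iff_true, true_iff, iff_false, false_iff, not_true, not_false_iff,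
              true_and, and_true, false_and, and_false, if_true, if_false,
              not_not, Finset.union_empty, Finset.empty_union,
              u_all i j hiB hjB hij, u_i i j hiB hij, u_j i j hjB hij, u_ej j hjB, u_ei i hiB]
            ring
        · by_cases hsp : spos S B
          · rw [Even.neg_one_pow hsp]
            simp only [mem_XA_c0, mem_YA_c0, mem_XB_c0, mem_XA_c1, mem_YA_c1,
              mem_XB_c1, mem_XA_c2, mem_YA_c2, mem_XB_c2, valid_c0, valid_c1, valid_c2,
              hBS, hiB, hjB, hsp, fin2_one_ne_zero, eq_self_iff_true,
              iff_true, true_iff, iff_false, false_iff, not_true, not_false_iff,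
              true_and, and_true, false_and, and_false, if_true, if_false,
              not_not, Finset.union_empty, Finset.empty_union,
              u_i i j hiB hij, Finset.erase_eq_of_notMem hjB]
            ring
          · rw [Odd.neg_one_pow (Nat.not_even_iff_odd.mp hsp)]
            simp only [mem_XA_c0, mem_YA_c0, mem_XB_c0, mem_XA_c1, mem_YA_c1,
              mem_XB_c1, mem_XA_c2, mem_YA_c2, mem_XB_c2, valid_c0, valid_c1, valid_c2,
              hBS, hiB, hjB, hsp, fin2_one_ne_zero, eq_self_iff_true,
              iff_true, true_iff, iff_false, false_iff, not_true, not_false_iff,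
              true_and, and_true, false_and, and_false, if_true, if_false,
              not_not, Finset.union_empty, Finset.empty_union,
              u_i i j hiB hij, Finset.erase_eq_of_notMem hjB]
            ring
      · simp only [mem_XA_c0, mem_YA_c0, mem_XB_c0, mem_XA_c1, mem_YA_c1,
          mem_XB_c1, mem_XA_c2, mem_YA_c2, mem_XB_c2, valid_c0, valid_c1, valid_c2,
          hBS, hiB, fin2_one_ne_zero, eq_self_iff_true,
          iff_true, true_iff, iff_false, false_iff, not_true, not_false_iff,
          true_and, and_true, false_and, and_false, if_true, if_false,
          Finset.union_empty, Finset.empty_union]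
        rw [hdist i B hiB]
        ring
    · simp only [mem_XA_c0, mem_YA_c0, mem_XB_c0, mem_XA_c1, mem_YA_c1,
        mem_XB_c1, mem_XA_c2, mem_YA_c2, mem_XB_c2, hBS,
        iff_false, false_iff, false_and, and_false, if_false, if_neg hBS]
      ring
  · rw [← Finset.sum_filter, filter_subset_powerset]
    rfl

end Gadget4
section Gadget5

variable {N : Type} [Fintype N] [DecidableEq N]
variable (S : Finset N) (i j : N)

lemma neg_pow_insert {x : N} {C : Finset N} (hx : x ∉ C) (hcard : C.card < S.card) :
    ((-1:ℝ))^(S.card - (insert x C).card) = -((-1:ℝ))^(S.card - C.card) := by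
  rw [Finset.card_insert_of_notMem hx]
  have h : S.card - C.card = (S.card - (C.card+1)) + 1 := by omega
  rw [h, pow_succ]
  ring

lemma spos_insert {x : N} {C : Finset N} (hx : x ∉ C) (hcard : C.card < S.card) :
    (spos S (insert x C) ↔ ¬ spos S C) := by
  unfold spos
  rw [Finset.card_insert_of_notMem hx]
  have h : S.card - C.card = (S.card - (C.card+1)) + 1 := by omega
  rw [h, Nat.even_add_one]
  tauto

lemma powerset_facts {x : N} (hxS : x ∈ S) {C : Finset N}
    (hC : C ∈ (S.erase x).powerset) :
    x ∉ C ∧ C ⊆ S ∧ C.card < S.card := by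
  have h1 : C ⊆ S.erase x := Finset.mem_powerset.mp hC
  refine ⟨fun h => (Finset.mem_erase.mp (h1 h)).1 rfl, h1.trans (Finset.erase_subset _ _), ?_⟩
  calc C.card ≤ (S.erase x).card := Finset.card_le_card h1
    _ < S.card := Finset.card_lt_card (Finset.erase_ssubset hxS)

lemma split_powerset (x : N) (hxS : x ∈ S) (G : Finset N → ℝ) :
    ∑ B ∈ S.powerset, G B
      = ∑ C ∈ (S.erase x).powerset, G C + ∑ C ∈ (S.erase x).powerset, G (insert x C) := by
  have hnotin : x ∉ S.erase x := Finset.notMem_erase x S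
  have hS : insert x (S.erase x) = S := Finset.insert_erase hxS
  conv_lhs => rw [← hS]
  exact Finset.sum_powerset_insert hnotin G

lemma algY_i (hjS : j ∈ S) (hij : i ≠ j) (f : N → Finset N → ℝ) (hdist : DistRule f) :
    ∑ B ∈ S.powerset,
      ((if i ∈ B ∧ j ∈ B then 2 * (-1:ℝ)^(S.card - B.card) * f i (B.erase j) else 0)
        + (if i ∈ B then (if j ∈ B then (-1:ℝ) else 1) * (-1:ℝ)^(S.card - B.card) * f i B else 0))
      = - coeff (f i) S := by
  rw [coeff, split_powerset S j hjS, split_powerset S j hjS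
    (fun R => (-1:ℝ)^(S.card - R.card) * f i R), ← Finset.sum_add_distrib, neg_add,
    ← Finset.sum_neg_distrib, ← Finset.sum_neg_distrib, ← Finset.sum_add_distrib]
  refine Finset.sum_congr rfl fun C hC => ?_
  obtain ⟨hjC, hCS, hcard⟩ := powerset_facts S hjS hC
  have hijC : i ∈ insert j C ↔ i ∈ C := by
    simp [Finset.mem_insert, hij]
  have herase : (insert j C).erase j = C := Finset.erase_insert hjC
  have hpow := neg_pow_insert S (x := j) hjC hcard
  by_cases hiC : i ∈ C
  · simp only [if_neg (fun h : i ∈ C ∧ j ∈ C => hjC h.2), if_pos hiC, if_neg hjC,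
      if_pos (Finset.mem_insert_self j C), hijC, if_pos (And.intro hiC (Finset.mem_insert_self j C)),
      herase, hpow]
    ring
  · have hiC' : i ∉ insert j C := fun h => hiC (hijC.mp h)
    simp only [if_neg (fun h : i ∈ C ∧ j ∈ C => hiC h.1), if_neg hiC,
      if_neg (fun h : i ∈ insert j C ∧ j ∈ insert j C => hiC' h.1), if_neg hiC',
      hdist i C hiC, hdist i (insert j C) hiC']
    ring

lemma algX_j (hiS : i ∈ S) (hij : i ≠ j) (f : N → Finset N → ℝ) (hdist : DistRule f) :
    ∑ B ∈ S.powerset,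
      ((if i ∈ B ∧ j ∈ B then 2 * f j (if spos S B then B else B.erase i) else 0)
        + (if j ∈ B then -(f j B) else 0))
      = coeff (f j) S := by
  rw [coeff, split_powerset S i hiS, split_powerset S i hiS
    (fun R => (-1:ℝ)^(S.card - R.card) * f j R), ← Finset.sum_add_distrib,
    ← Finset.sum_add_distrib]
  refine Finset.sum_congr rfl fun C hC => ?_
  obtain ⟨hiC, hCS, hcard⟩ := powerset_facts S hiS hC
  have hjiC : j ∈ insert i C ↔ j ∈ C := by
    simp [Finset.mem_insert, Ne.symm hij]
  have herase : (insert i C).erase i = C := Finset.erase_insert hiC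
  have hpow := neg_pow_insert S (x := i) hiC hcard
  have hspos := spos_insert S (x := i) hiC hcard
  by_cases hjC : j ∈ C
  · by_cases hsC : spos S C
    · rw [Even.neg_one_pow hsC] at hpow ⊢
      simp only [if_neg (fun h : i ∈ C ∧ j ∈ C => hiC h.1), if_pos hjC,
        if_pos (And.intro (Finset.mem_insert_self i C) (hjiC.mpr hjC)),
        if_pos (hjiC.mpr hjC), hpow, herase,
        if_neg (fun h => (hspos.mp h) hsC)]
      ring
    · rw [Odd.neg_one_pow (Nat.not_even_iff_odd.mp hsC)] at hpow ⊢
      simp only [if_neg (fun h : i ∈ C ∧ j ∈ C => hiC h.1), if_pos hjC,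
        if_pos (And.intro (Finset.mem_insert_self i C) (hjiC.mpr hjC)),
        if_pos (hjiC.mpr hjC), hpow, herase,
        if_pos (hspos.mpr hsC)]
      ring
  · have hjC' : j ∉ insert i C := fun h => hjC (hjiC.mp h)
    simp only [if_neg (fun h : i ∈ C ∧ j ∈ C => hjC h.2), if_neg hjC,
      if_neg (fun h : i ∈ insert i C ∧ j ∈ insert i C => hjC' h.2), if_neg hjC',
      hdist j C hjC, hdist j (insert i C) hjC']
    ring

lemma algY_j (hiS : i ∈ S) (hij : i ≠ j) (f : N → Finset N → ℝ) (hdist : DistRule f) :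
    ∑ B ∈ S.powerset,
      ((if i ∈ B ∧ j ∈ B then 2 * f j (if spos S B then B.erase i else B) else 0)
        + (if j ∈ B then -(f j B) else 0))
      = - coeff (f j) S := by
  rw [coeff, split_powerset S i hiS, split_powerset S i hiS
    (fun R => (-1:ℝ)^(S.card - R.card) * f j R), ← Finset.sum_add_distrib, neg_add,
    ← Finset.sum_neg_distrib, ← Finset.sum_neg_distrib, ← Finset.sum_add_distrib]
  refine Finset.sum_congr rfl fun C hC => ?_
  obtain ⟨hiC, hCS, hcard⟩ := powerset_facts S hiS hC
  have hjiC : j ∈ insert i C ↔ j ∈ C := by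
    simp [Finset.mem_insert, Ne.symm hij]
  have herase : (insert i C).erase i = C := Finset.erase_insert hiC
  have hpow := neg_pow_insert S (x := i) hiC hcard
  have hspos := spos_insert S (x := i) hiC hcard
  by_cases hjC : j ∈ C
  · by_cases hsC : spos S C
    · rw [Even.neg_one_pow hsC] at hpow ⊢
      simp only [if_neg (fun h : i ∈ C ∧ j ∈ C => hiC h.1), if_pos hjC,
        if_pos (And.intro (Finset.mem_insert_self i C) (hjiC.mpr hjC)),
        if_pos (hjiC.mpr hjC), hpow, herase,
        if_neg (fun h => (hspos.mp h) hsC)]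
      ring
    · rw [Odd.neg_one_pow (Nat.not_even_iff_odd.mp hsC)] at hpow ⊢
      simp only [if_neg (fun h : i ∈ C ∧ j ∈ C => hiC h.1), if_pos hjC,
        if_pos (And.intro (Finset.mem_insert_self i C) (hjiC.mpr hjC)),
        if_pos (hjiC.mpr hjC), hpow, herase,
        if_pos (hspos.mpr hsC)]
      ring
  · have hjC' : j ∉ insert i C := fun h => hjC (hjiC.mp h)
    simp only [if_neg (fun h : i ∈ C ∧ j ∈ C => hjC h.2), if_neg hjC,
      if_neg (fun h : i ∈ insert i C ∧ j ∈ insert i C => hjC' h.2), if_neg hjC',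
      hdist j C hjC, hdist j (insert i C) hjC']
    ring

end Gadget5
section Gadget6

variable {N : Type} [Fintype N] [DecidableEq N]
variable (S : Finset N) (i j : N)

lemma delta_iY (W : Finset N → ℝ) (f : N → Finset N → ℝ) (hdist : DistRule f)
    (hij : i ≠ j) (hjS : j ∈ S)
    (a1 a2 : N → Finset (Res N))
    (h1i : a1 i = XA S i j) (h2i : a2 i = YA S i j)
    (h1j : a1 j = YB S i j) (h2j : a2 j = YB S i j)
    (h1k : ∀ p, p ≠ i → p ≠ j → a1 p = CK S i j p)
    (h2k : ∀ p, p ≠ i → p ≠ j → a2 p = CK S i j p) :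
    utility (Gm S i j W) (fun _ => f) a1 i - utility (Gm S i j W) (fun _ => f) a2 i
      = - coeff (f i) S := by
  rw [utility_eq S i j W f a1 hij h1k i _ h1i,
      utility_eq S i j W f a2 hij h2k i _ h2i,
      ← Finset.sum_sub_distrib]
  simp only [P, h1i, h1j, h2i, h2j]
  rw [Fintype.sum_prod_type]
  simp only [Fintype.sum_prod_type]
  trans (∑ B : Finset N, if B ⊆ S then ((if i ∈ B ∧ j ∈ B then 2 * (-1:ℝ)^(S.card - B.card) * f i (B.erase j) else 0) + (if i ∈ B then (if j ∈ B then (-1:ℝ) else 1) * (-1:ℝ)^(S.card - B.card) * f i B else 0)) else 0)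
  · refine Finset.sum_congr rfl fun B _ => ?_
    rw [Fin.sum_univ_three]
    simp only [Fin.sum_univ_two]
    by_cases hBS : B ⊆ S
    · rw [if_pos hBS]
      by_cases hiB : i ∈ B
      · by_cases hjB : j ∈ B
        · by_cases hsp : spos S B
          ·
            rw [Even.neg_one_pow hsp]
            simp only [mem_XA_c0, mem_YA_c0, mem_XB_c0, mem_YB_c0, mem_XA_c1, mem_YA_c1, mem_XB_c1, mem_YB_c1, mem_XA_c2, mem_YA_c2, mem_XB_c2, mem_YB_c2, valid_c0, valid_c1, valid_c2, fin2_one_ne_zero, eq_self_iff_true, iff_true, true_iff, iff_false, false_iff, not_true, not_false_iff, true_and, and_true, false_and, and_false, if_true, if_false, not_not, Finset.union_empty, Finset.empty_union, hBS, hiB, hjB, hsp, u_all i j hiB hjB hij, u_i i j hiB hij, u_j i j hjB hij, u_ej j hjB, u_ei i hiB]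
            ring
          ·
            rw [Odd.neg_one_pow (Nat.not_even_iff_odd.mp hsp)]
            simp only [mem_XA_c0, mem_YA_c0, mem_XB_c0, mem_YB_c0, mem_XA_c1, mem_YA_c1, mem_XB_c1, mem_YB_c1, mem_XA_c2, mem_YA_c2, mem_XB_c2, mem_YB_c2, valid_c0, valid_c1, valid_c2, fin2_one_ne_zero, eq_self_iff_true, iff_true, true_iff, iff_false, false_iff, not_true, not_false_iff, true_and, and_true, false_and, and_false, if_true, if_false, not_not, Finset.union_empty, Finset.empty_union, hBS, hiB, hjB, hsp, u_all i j hiB hjB hij, u_i i j hiB hij, u_j i j hjB hij, u_ej j hjB, u_ei i hiB]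
            ring
        · by_cases hsp : spos S B
          ·
            rw [Even.neg_one_pow hsp]
            simp only [mem_XA_c0, mem_YA_c0, mem_XB_c0, mem_YB_c0, mem_XA_c1, mem_YA_c1, mem_XB_c1, mem_YB_c1, mem_XA_c2, mem_YA_c2, mem_XB_c2, mem_YB_c2, valid_c0, valid_c1, valid_c2, fin2_one_ne_zero, eq_self_iff_true, iff_true, true_iff, iff_false, false_iff, not_true, not_false_iff, true_and, and_true, false_and, and_false, if_true, if_false, not_not, Finset.union_empty, Finset.empty_union, hBS, hiB, hjB, hsp, u_i i j hiB hij, u_ei i hiB, Finset.erase_eq_of_notMem hjB]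
            ring
          ·
            rw [Odd.neg_one_pow (Nat.not_even_iff_odd.mp hsp)]
            simp only [mem_XA_c0, mem_YA_c0, mem_XB_c0, mem_YB_c0, mem_XA_c1, mem_YA_c1, mem_XB_c1, mem_YB_c1, mem_XA_c2, mem_YA_c2, mem_XB_c2, mem_YB_c2, valid_c0, valid_c1, valid_c2, fin2_one_ne_zero, eq_self_iff_true, iff_true, true_iff, iff_false, false_iff, not_true, not_false_iff, true_and, and_true, false_and, and_false, if_true, if_false, not_not, Finset.union_empty, Finset.empty_union, hBS, hiB, hjB, hsp, u_i i j hiB hij, u_ei i hiB, Finset.erase_eq_of_notMem hjB]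
            ring
      · by_cases hjB : j ∈ B
        ·
          simp only [mem_XA_c0, mem_YA_c0, mem_XB_c0, mem_YB_c0, mem_XA_c1, mem_YA_c1, mem_XB_c1, mem_YB_c1, mem_XA_c2, mem_YA_c2, mem_XB_c2, mem_YB_c2, valid_c0, valid_c1, valid_c2, fin2_one_ne_zero, eq_self_iff_true, iff_true, true_iff, iff_false, false_iff, not_true, not_false_iff, true_and, and_true, false_and, and_false, if_true, if_false, not_not, Finset.union_empty, Finset.empty_union, hBS, hiB, hjB, u_base i j hiB, u_j i j hjB hij, u_ej j hjB, Finset.erase_eq_of_notMem hiB]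
          ring
        ·
          simp only [mem_XA_c0, mem_YA_c0, mem_XB_c0, mem_YB_c0, mem_XA_c1, mem_YA_c1, mem_XB_c1, mem_YB_c1, mem_XA_c2, mem_YA_c2, mem_XB_c2, mem_YB_c2, valid_c0, valid_c1, valid_c2, fin2_one_ne_zero, eq_self_iff_true, iff_true, true_iff, iff_false, false_iff, not_true, not_false_iff, true_and, and_true, false_and, and_false, if_true, if_false, not_not, Finset.union_empty, Finset.empty_union, hBS, hiB, hjB, Finset.erase_eq_of_notMem hiB, Finset.erase_eq_of_notMem hjB]
          ring
    · simp only [mem_XA_c0, mem_YA_c0, mem_XB_c0, mem_YB_c0, mem_XA_c1, mem_YA_c1, mem_XB_c1, mem_YB_c1, mem_XA_c2, mem_YA_c2, mem_XB_c2, mem_YB_c2, valid_c0, valid_c1, valid_c2, hBS, iff_false, false_iff, false_and, and_false, if_false, if_neg hBS]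
      ring
  · rw [← Finset.sum_filter, filter_subset_powerset]
    exact algY_i S i j hjS hij f hdist

lemma delta_jX (W : Finset N → ℝ) (f : N → Finset N → ℝ) (hdist : DistRule f)
    (hij : i ≠ j) (hiS : i ∈ S)
    (a1 a2 : N → Finset (Res N))
    (h1i : a1 i = XA S i j) (h2i : a2 i = XA S i j)
    (h1j : a1 j = XB S i j) (h2j : a2 j = YB S i j)
    (h1k : ∀ p, p ≠ i → p ≠ j → a1 p = CK S i j p)
    (h2k : ∀ p, p ≠ i → p ≠ j → a2 p = CK S i j p) :
    utility (Gm S i j W) (fun _ => f) a1 j - utility (Gm S i j W) (fun _ => f) a2 j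
      = coeff (f j) S := by
  rw [utility_eq S i j W f a1 hij h1k j _ h1j,
      utility_eq S i j W f a2 hij h2k j _ h2j,
      ← Finset.sum_sub_distrib]
  simp only [P, h1i, h1j, h2i, h2j]
  rw [Fintype.sum_prod_type]
  simp only [Fintype.sum_prod_type]
  trans (∑ B : Finset N, if B ⊆ S then ((if i ∈ B ∧ j ∈ B then 2 * f j (if spos S B then B else B.erase i) else 0) + (if j ∈ B then -(f j B) else 0)) else 0)
  · refine Finset.sum_congr rfl fun B _ => ?_
    rw [Fin.sum_univ_three]
    simp only [Fin.sum_univ_two]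
    by_cases hBS : B ⊆ S
    · rw [if_pos hBS]
      by_cases hiB : i ∈ B
      · by_cases hjB : j ∈ B
        · by_cases hsp : spos S B
          ·
            simp only [mem_XA_c0, mem_YA_c0, mem_XB_c0, mem_YB_c0, mem_XA_c1, mem_YA_c1, mem_XB_c1, mem_YB_c1, mem_XA_c2, mem_YA_c2, mem_XB_c2, mem_YB_c2, valid_c0, valid_c1, valid_c2, fin2_one_ne_zero, eq_self_iff_true, iff_true, true_iff, iff_false, false_iff, not_true, not_false_iff, true_and, and_true, false_and, and_false, if_true, if_false, not_not, Finset.union_empty, Finset.empty_union, hBS, hiB, hjB, hsp, u_all i j hiB hjB hij, u_i i j hiB hij, u_j i j hjB hij, u_ej j hjB, u_ei i hiB]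
            ring
          ·
            simp only [mem_XA_c0, mem_YA_c0, mem_XB_c0, mem_YB_c0, mem_XA_c1, mem_YA_c1, mem_XB_c1, mem_YB_c1, mem_XA_c2, mem_YA_c2, mem_XB_c2, mem_YB_c2, valid_c0, valid_c1, valid_c2, fin2_one_ne_zero, eq_self_iff_true, iff_true, true_iff, iff_false, false_iff, not_true, not_false_iff, true_and, and_true, false_and, and_false, if_true, if_false, not_not, Finset.union_empty, Finset.empty_union, hBS, hiB, hjB, hsp, u_all i j hiB hjB hij, u_i i j hiB hij, u_j i j hjB hij, u_ej j hjB, u_ei i hiB]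
            ring
        · by_cases hsp : spos S B
          ·
            simp only [mem_XA_c0, mem_YA_c0, mem_XB_c0, mem_YB_c0, mem_XA_c1, mem_YA_c1, mem_XB_c1, mem_YB_c1, mem_XA_c2, mem_YA_c2, mem_XB_c2, mem_YB_c2, valid_c0, valid_c1, valid_c2, fin2_one_ne_zero, eq_self_iff_true, iff_true, true_iff, iff_false, false_iff, not_true, not_false_iff, true_and, and_true, false_and, and_false, if_true, if_false, not_not, Finset.union_empty, Finset.empty_union, hBS, hiB, hjB, hsp, u_i i j hiB hij, u_ei i hiB, Finset.erase_eq_of_notMem hjB]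
            ring
          ·
            simp only [mem_XA_c0, mem_YA_c0, mem_XB_c0, mem_YB_c0, mem_XA_c1, mem_YA_c1, mem_XB_c1, mem_YB_c1, mem_XA_c2, mem_YA_c2, mem_XB_c2, mem_YB_c2, valid_c0, valid_c1, valid_c2, fin2_one_ne_zero, eq_self_iff_true, iff_true, true_iff, iff_false, false_iff, not_true, not_false_iff, true_and, and_true, false_and, and_false, if_true, if_false, not_not, Finset.union_empty, Finset.empty_union, hBS, hiB, hjB, hsp, u_i i j hiB hij, u_ei i hiB, Finset.erase_eq_of_notMem hjB]
            ring
      · by_cases hjB : j ∈ B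
        ·
          simp only [mem_XA_c0, mem_YA_c0, mem_XB_c0, mem_YB_c0, mem_XA_c1, mem_YA_c1, mem_XB_c1, mem_YB_c1, mem_XA_c2, mem_YA_c2, mem_XB_c2, mem_YB_c2, valid_c0, valid_c1, valid_c2, fin2_one_ne_zero, eq_self_iff_true, iff_true, true_iff, iff_false, false_iff, not_true, not_false_iff, true_and, and_true, false_and, and_false, if_true, if_false, not_not, Finset.union_empty, Finset.empty_union, hBS, hiB, hjB, u_base i j hiB, u_j i j hjB hij, u_ej j hjB, Finset.erase_eq_of_notMem hiB]
          ring
        ·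
          simp only [mem_XA_c0, mem_YA_c0, mem_XB_c0, mem_YB_c0, mem_XA_c1, mem_YA_c1, mem_XB_c1, mem_YB_c1, mem_XA_c2, mem_YA_c2, mem_XB_c2, mem_YB_c2, valid_c0, valid_c1, valid_c2, fin2_one_ne_zero, eq_self_iff_true, iff_true, true_iff, iff_false, false_iff, not_true, not_false_iff, true_and, and_true, false_and, and_false, if_true, if_false, not_not, Finset.union_empty, Finset.empty_union, hBS, hiB, hjB, Finset.erase_eq_of_notMem hiB, Finset.erase_eq_of_notMem hjB]
          ring
    · simp only [mem_XA_c0, mem_YA_c0, mem_XB_c0, mem_YB_c0, mem_XA_c1, mem_YA_c1, mem_XB_c1, mem_YB_c1, mem_XA_c2, mem_YA_c2, mem_XB_c2, mem_YB_c2, valid_c0, valid_c1, valid_c2, hBS, iff_false, false_iff, false_and, and_false, if_false, if_neg hBS]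
      ring
  · rw [← Finset.sum_filter, filter_subset_powerset]
    exact algX_j S i j hiS hij f hdist

lemma delta_jY (W : Finset N → ℝ) (f : N → Finset N → ℝ) (hdist : DistRule f)
    (hij : i ≠ j) (hiS : i ∈ S)
    (a1 a2 : N → Finset (Res N))
    (h1i : a1 i = YA S i j) (h2i : a2 i = YA S i j)
    (h1j : a1 j = XB S i j) (h2j : a2 j = YB S i j)
    (h1k : ∀ p, p ≠ i → p ≠ j → a1 p = CK S i j p)
    (h2k : ∀ p, p ≠ i → p ≠ j → a2 p = CK S i j p) :
    utility (Gm S i j W) (fun _ => f) a1 j - utility (Gm S i j W) (fun _ => f) a2 j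
      = - coeff (f j) S := by
  rw [utility_eq S i j W f a1 hij h1k j _ h1j,
      utility_eq S i j W f a2 hij h2k j _ h2j,
      ← Finset.sum_sub_distrib]
  simp only [P, h1i, h1j, h2i, h2j]
  rw [Fintype.sum_prod_type]
  simp only [Fintype.sum_prod_type]
  trans (∑ B : Finset N, if B ⊆ S then ((if i ∈ B ∧ j ∈ B then 2 * f j (if spos S B then B.erase i else B) else 0) + (if j ∈ B then -(f j B) else 0)) else 0)
  · refine Finset.sum_congr rfl fun B _ => ?_
    rw [Fin.sum_univ_three]
    simp only [Fin.sum_univ_two]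
    by_cases hBS : B ⊆ S
    · rw [if_pos hBS]
      by_cases hiB : i ∈ B
      · by_cases hjB : j ∈ B
        · by_cases hsp : spos S B
          ·
            simp only [mem_XA_c0, mem_YA_c0, mem_XB_c0, mem_YB_c0, mem_XA_c1, mem_YA_c1, mem_XB_c1, mem_YB_c1, mem_XA_c2, mem_YA_c2, mem_XB_c2, mem_YB_c2, valid_c0, valid_c1, valid_c2, fin2_one_ne_zero, eq_self_iff_true, iff_true, true_iff, iff_false, false_iff, not_true, not_false_iff, true_and, and_true, false_and, and_false, if_true, if_false, not_not, Finset.union_empty, Finset.empty_union, hBS, hiB, hjB, hsp, u_all i j hiB hjB hij, u_i i j hiB hij, u_j i j hjB hij, u_ej j hjB, u_ei i hiB]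
            ring
          ·
            simp only [mem_XA_c0, mem_YA_c0, mem_XB_c0, mem_YB_c0, mem_XA_c1, mem_YA_c1, mem_XB_c1, mem_YB_c1, mem_XA_c2, mem_YA_c2, mem_XB_c2, mem_YB_c2, valid_c0, valid_c1, valid_c2, fin2_one_ne_zero, eq_self_iff_true, iff_true, true_iff, iff_false, false_iff, not_true, not_false_iff, true_and, and_true, false_and, and_false, if_true, if_false, not_not, Finset.union_empty, Finset.empty_union, hBS, hiB, hjB, hsp, u_all i j hiB hjB hij, u_i i j hiB hij, u_j i j hjB hij, u_ej j hjB, u_ei i hiB]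
            ring
        · by_cases hsp : spos S B
          ·
            simp only [mem_XA_c0, mem_YA_c0, mem_XB_c0, mem_YB_c0, mem_XA_c1, mem_YA_c1, mem_XB_c1, mem_YB_c1, mem_XA_c2, mem_YA_c2, mem_XB_c2, mem_YB_c2, valid_c0, valid_c1, valid_c2, fin2_one_ne_zero, eq_self_iff_true, iff_true, true_iff, iff_false, false_iff, not_true, not_false_iff, true_and, and_true, false_and, and_false, if_true, if_false, not_not, Finset.union_empty, Finset.empty_union, hBS, hiB, hjB, hsp, u_i i j hiB hij, u_ei i hiB, Finset.erase_eq_of_notMem hjB]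
            ring
          ·
            simp only [mem_XA_c0, mem_YA_c0, mem_XB_c0, mem_YB_c0, mem_XA_c1, mem_YA_c1, mem_XB_c1, mem_YB_c1, mem_XA_c2, mem_YA_c2, mem_XB_c2, mem_YB_c2, valid_c0, valid_c1, valid_c2, fin2_one_ne_zero, eq_self_iff_true, iff_true, true_iff, iff_false, false_iff, not_true, not_false_iff, true_and, and_true, false_and, and_false, if_true, if_false, not_not, Finset.union_empty, Finset.empty_union, hBS, hiB, hjB, hsp, u_i i j hiB hij, u_ei i hiB, Finset.erase_eq_of_notMem hjB]
            ring
      · by_cases hjB : j ∈ B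
        ·
          simp only [mem_XA_c0, mem_YA_c0, mem_XB_c0, mem_YB_c0, mem_XA_c1, mem_YA_c1, mem_XB_c1, mem_YB_c1, mem_XA_c2, mem_YA_c2, mem_XB_c2, mem_YB_c2, valid_c0, valid_c1, valid_c2, fin2_one_ne_zero, eq_self_iff_true, iff_true, true_iff, iff_false, false_iff, not_true, not_false_iff, true_and, and_true, false_and, and_false, if_true, if_false, not_not, Finset.union_empty, Finset.empty_union, hBS, hiB, hjB, u_base i j hiB, u_j i j hjB hij, u_ej j hjB, Finset.erase_eq_of_notMem hiB]
          ring
        ·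
          simp only [mem_XA_c0, mem_YA_c0, mem_XB_c0, mem_YB_c0, mem_XA_c1, mem_YA_c1, mem_XB_c1, mem_YB_c1, mem_XA_c2, mem_YA_c2, mem_XB_c2, mem_YB_c2, valid_c0, valid_c1, valid_c2, fin2_one_ne_zero, eq_self_iff_true, iff_true, true_iff, iff_false, false_iff, not_true, not_false_iff, true_and, and_true, false_and, and_false, if_true, if_false, not_not, Finset.union_empty, Finset.empty_union, hBS, hiB, hjB, Finset.erase_eq_of_notMem hiB, Finset.erase_eq_of_notMem hjB]
          ring
    · simp only [mem_XA_c0, mem_YA_c0, mem_XB_c0, mem_YB_c0, mem_XA_c1, mem_YA_c1, mem_XB_c1, mem_YB_c1, mem_XA_c2, mem_YA_c2, mem_XB_c2, mem_YB_c2, valid_c0, valid_c1, valid_c2, hBS, iff_false, false_iff, false_and, and_false, if_false, if_neg hBS]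
      ring
  · rw [← Finset.sum_filter, filter_subset_powerset]
    exact algY_j S i j hiS hij f hdist

end Gadget6
section Gadget7

variable {N : Type} [Fintype N] [DecidableEq N]

lemma keyG (W : Finset N → ℝ) (f : N → Finset N → ℝ) (hdist : DistRule f)
    (hPNE : GuaranteesPNE1 W f) (S : Finset N) (i j : N) (hij : i ≠ j)
    (hiS : i ∈ S) (hjS : j ∈ S) :
    ¬ (0 < coeff (f i) S ∧ coeff (f j) S < 0) := by
  rintro ⟨hpos, hneg⟩
  obtain ⟨a, hmem, hstab⟩ := hPNE (Gm S i j W) (fun _ => rfl)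
  have hji : j ≠ i := Ne.symm hij
  have hacti : (Gm S i j W).act i = {XA S i j, YA S i j} := by
    show (if i = i then _ else _) = _
    rw [if_pos rfl]
  have hactj : (Gm S i j W).act j = {XB S i j, YB S i j} := by
    show (if j = i then _ else _) = _
    rw [if_neg hji]
    rw [if_pos rfl]
  have hai : a i = XA S i j ∨ a i = YA S i j := by
    have := hmem i
    rw [hacti] at this
    simpa using this
  have haj : a j = XB S i j ∨ a j = YB S i j := by
    have := hmem j
    rw [hactj] at this
    simpa using this
  have hak : ∀ p, p ≠ i → p ≠ j → a p = CK S i j p := by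
    intro p hpi hpj
    have := hmem p
    have hact : (Gm S i j W).act p = {CK S i j p} := by
      show (if p = i then _ else _) = _
      rw [if_neg hpi, if_neg hpj]
    rw [hact] at this
    simpa using this
  have hupd : ∀ (b : Finset (Res N)) (p q : N), q ≠ p →
      Function.update a p b q = a q := fun b p q h => Function.update_of_ne h _ _
  rcases hai with hX | hY
  · rcases haj with hXj | hYj
    · -- (XA, XB): j deviates to YB
      have hdev := hstab j (YB S i j) (by rw [hactj]; simp)
      have hdel := delta_jX S i j W f hdist hij hiS a (Function.update a j (YB S i j))
        hX (by rw [hupd _ j i hij]; exact hX) hXj (Function.update_self _ _ _)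
        hak (fun p hpi hpj => by rw [hupd _ j p hpj]; exact hak p hpi hpj)
      have : utility (Gm S i j W) (fun _ => f) a j
          < utility (Gm S i j W) (fun _ => f) (Function.update a j (YB S i j)) j := by
        linarith
      exact absurd hdev (not_le.mpr this)
    · -- (XA, YB): i deviates to YA
      have hdev := hstab i (YA S i j) (by rw [hacti]; simp)
      have hdel := delta_iY S i j W f hdist hij hjS a (Function.update a i (YA S i j))
        hX (Function.update_self _ _ _) hYj (by rw [hupd _ i j hji]; exact hYj)
        hak (fun p hpi hpj => by rw [hupd _ i p hpi]; exact hak p hpi hpj)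
      have : utility (Gm S i j W) (fun _ => f) a i
          < utility (Gm S i j W) (fun _ => f) (Function.update a i (YA S i j)) i := by
        linarith
      exact absurd hdev (not_le.mpr this)
  · rcases haj with hXj | hYj
    · -- (YA, XB): i deviates to XA
      have hdev := hstab i (XA S i j) (by rw [hacti]; simp)
      have hdel := delta_iX S i j W f hdist hij (Function.update a i (XA S i j)) a
        (Function.update_self _ _ _) hY (by rw [hupd _ i j hji]; exact hXj) hXj
        (fun p hpi hpj => by rw [hupd _ i p hpi]; exact hak p hpi hpj) hak
      have : utility (Gm S i j W) (fun _ => f) a i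
          < utility (Gm S i j W) (fun _ => f) (Function.update a i (XA S i j)) i := by
        linarith
      exact absurd hdev (not_le.mpr this)
    · -- (YA, YB): j deviates to XB
      have hdev := hstab j (XB S i j) (by rw [hactj]; simp)
      have hdel := delta_jY S i j W f hdist hij hiS (Function.update a j (XB S i j)) a
        (by rw [hupd _ j i hij]; exact hY) hY (Function.update_self _ _ _) hYj
        (fun p hpi hpj => by rw [hupd _ j p hpj]; exact hak p hpi hpj) hak
      have : utility (Gm S i j W) (fun _ => f) a j
          < utility (Gm S i j W) (fun _ => f) (Function.update a j (XB S i j)) j := by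
        linarith
      exact absurd hdev (not_le.mpr this)

lemma key_lemma (W : Finset N → ℝ) (f : N → Finset N → ℝ) (hdist : DistRule f)
    (hbb : BudgetBalanced W f) (hPNE : GuaranteesPNE1 W f) :
    ∀ T : Finset N, coeff W T = 0 → ∀ p : N, coeff (f p) T = 0 := by
  intro T hT p
  by_contra hne
  have hpT : p ∈ T := by
    by_contra hp
    exact hne (coeff_f_eq_zero_of_not_mem hdist hp)
  have hsum : ∑ q : N, coeff (f q) T = 0 := by
    rw [← coeff_W_eq_sum hdist hbb]; exact hT
  rcases lt_or_gt_of_ne hne with hlt | hgt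
  · -- p's coefficient negative: find a positive one
    have : ∃ q ∈ Finset.univ, 0 < coeff (f q) T := by
      by_contra h
      push_neg at h
      have hlt' : ∑ q : N, coeff (f q) T < ∑ _q : N, (0:ℝ) :=
        Finset.sum_lt_sum (fun q _ => h q (Finset.mem_univ q))
          ⟨p, Finset.mem_univ p, hlt⟩
      simp [hsum] at hlt'
    obtain ⟨q, -, hq⟩ := this
    have hqp : q ≠ p := fun h => by rw [h] at hq; linarith
    have hqT : q ∈ T := by
      by_contra hqT
      rw [coeff_f_eq_zero_of_not_mem hdist hqT] at hq
      linarith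
    exact keyG W f hdist hPNE T q p hqp hqT hpT ⟨hq, hlt⟩
  · have : ∃ q ∈ Finset.univ, coeff (f q) T < 0 := by
      by_contra h
      push_neg at h
      have hlt' : ∑ _q : N, (0:ℝ) < ∑ q : N, coeff (f q) T :=
        Finset.sum_lt_sum (fun q _ => h q (Finset.mem_univ q))
          ⟨p, Finset.mem_univ p, hgt⟩
      simp [hsum] at hlt'
    obtain ⟨q, -, hq⟩ := this
    have hqp : p ≠ q := fun h => by rw [← h] at hq; linarith
    have hqT : q ∈ T := by
      by_contra hqT
      rw [coeff_f_eq_zero_of_not_mem hdist hqT] at hq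
      linarith
    exact keyG W f hdist hPNE T p q hqp hpT hqT ⟨hgt, hq⟩

end Gadget7

/-- **Lemma 4.2.** If `f` is a budget-balanced distribution rule for
`W = (𝒯, Q)` guaranteeing a pure Nash equilibrium in all games in
`G(N, f, W)`, then the recursively defined basis distribution rules satisfy
`f(i,S) = ∑_{T∈𝒯} q_T · f^T(i,S)` for all `S ⊆ N` and `i ∈ S`. -/
theorem basisRule_decomposes (N : Type) [Fintype N] [DecidableEq N]
    (hN : 1 < Fintype.card N)
    (W : Finset N → ℝ) (f : N → Finset N → ℝ)
    (hW0 : W ∅ = 0) (hdist : DistRule f) (hbb : BudgetBalanced W f)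
    (hPNE : GuaranteesPNE1 W f) :
    ∀ S : Finset N, ∀ i ∈ S,
      f i S = ∑ T ∈ supp W, coeff W T * basisRule W f T i S :=
  final_of_key hdist (key_lemma W f hdist hbb hPNE)

end CostSharing
end

section
/- If f is a budget-balanced distribution rule for a welfare function W = (𝒯, Q) (with W(∅) = 0) on a finite player set N that guarantees the existence of a pure Nash equilibrium in all games in G(N, f, W), then for each recursively defined basis distribution rule f^T there exists a weight system ω^T such that f^T = f^T_{GWSV}[ω^T]; in particular each f^T is nonnegative. -/
open scoped BigOperators Classical

namespace CostSharing

variable {N : Type} [Fintype N] [DecidableEq N]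

/-! ### Auxiliary development for the proof -/

section AuxDev

set_option linter.unusedSectionVars false

variable {N : Type} [Fintype N] [DecidableEq N]

/-- The full Möbius transform of `f i ·`. -/
noncomputable def nu (f : N → Finset N → ℝ) (i : N) (S : Finset N) : ℝ :=
  ∑ R ∈ S.powerset.filter (fun R => i ∈ R), (-1 : ℝ) ^ (S.card - R.card) * f i R

lemma nu_eq_zero_of_not_mem (f : N → Finset N → ℝ) {i : N} {S : Finset N}
    (h : i ∉ S) : nu f i S = 0 := by
  unfold nu
  apply Finset.sum_eq_zero
  intro R hR
  simp only [Finset.mem_filter, Finset.mem_powerset] at hR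
  exact absurd (hR.1 hR.2) h

lemma neg1_sub {a b : ℕ} (h : b ≤ a) : (-1 : ℝ) ^ (a - b) = (-1) ^ a * (-1) ^ b := by
  have h1 : (-1 : ℝ) ^ a = (-1) ^ (a - b) * (-1) ^ b := by
    rw [← pow_add, Nat.sub_add_cancel h]
  have h2 : ((-1 : ℝ) ^ b) * ((-1 : ℝ) ^ b) = 1 := by
    rw [← pow_add]
    exact Even.neg_one_pow ⟨b, rfl⟩
  calc (-1 : ℝ) ^ (a - b) = (-1) ^ (a-b) * ((-1)^b * (-1)^b) := by rw [h2, mul_one]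
    _ = ((-1) ^ (a-b) * (-1)^b) * (-1)^b := by ring
    _ = (-1)^a * (-1)^b := by rw [← h1]

lemma sum_neg_one_pow_interval (S R : Finset N) (hRS : R ⊆ S) :
    (∑ C ∈ S.powerset.filter (fun C => R ⊆ C), (-1 : ℝ) ^ (S.card - C.card)) =
      if R = S then 1 else 0 := by
  have himg : S.powerset.filter (fun C => R ⊆ C)
      = (S \ R).powerset.image (fun D => R ∪ D) := by
    ext C
    simp only [Finset.mem_filter, Finset.mem_powerset, Finset.mem_image]
    constructor
    · rintro ⟨hCS, hRC⟩
      exact ⟨C \ R, by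
        constructor
        · exact fun x hx => by
            simp only [Finset.mem_sdiff] at hx ⊢
            exact ⟨hCS hx.1, hx.2⟩
        · rw [Finset.union_sdiff_of_subset hRC]⟩
    · rintro ⟨D, hD, rfl⟩
      exact ⟨Finset.union_subset hRS (hD.trans (Finset.sdiff_subset)), Finset.subset_union_left⟩
  rw [himg, Finset.sum_image]
  · have hcard : ∀ D ∈ (S \ R).powerset, (R ∪ D).card = R.card + D.card := by
      intro D hD
      simp only [Finset.mem_powerset] at hD
      refine Finset.card_union_of_disjoint ?_
      exact Finset.disjoint_left.mpr fun x hxR hxD =>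
        (Finset.mem_sdiff.mp (hD hxD)).2 hxR
    have : ∀ D ∈ (S \ R).powerset, (-1 : ℝ) ^ (S.card - (R ∪ D).card)
        = ((-1) ^ S.card * (-1) ^ R.card) * (-1) ^ D.card := by
      intro D hD
      have hsub : (R ∪ D).card ≤ S.card := by
        refine Finset.card_le_card (Finset.union_subset hRS ?_)
        exact (Finset.mem_powerset.mp hD).trans Finset.sdiff_subset
      rw [neg1_sub hsub, hcard D hD, pow_add]
      ring
    rw [Finset.sum_congr rfl this, ← Finset.mul_sum]
    have hz : (∑ D ∈ (S \ R).powerset, (-1 : ℝ) ^ D.card)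
        = if (S \ R) = ∅ then 1 else 0 := by
      have := @Finset.sum_powerset_neg_one_pow_card N _ (S \ R)
      have hcast := congrArg (fun z : ℤ => (z : ℝ)) this
      push_cast at hcast
      simpa using hcast
    rw [hz]
    by_cases h : R = S
    · subst h
      simp only [sdiff_self, Finset.bot_eq_empty, ite_true, mul_one, if_true]
      rw [← pow_add]
      exact Even.neg_one_pow ⟨R.card, rfl⟩
    · have hne : S \ R ≠ ∅ := by
        intro hempty
        exact h (Finset.Subset.antisymm hRS (by
          intro x hx
          by_contra hxR
          have : x ∈ S \ R := Finset.mem_sdiff.mpr ⟨hx, hxR⟩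
          simp [hempty] at this))
      simp [h, hne]
  · intro D1 h1 D2 h2 heq
    have k1 : Disjoint R D1 := Finset.disjoint_left.mpr fun x hxR hxD =>
      (Finset.mem_sdiff.mp ((Finset.mem_powerset.mp h1) hxD)).2 hxR
    have k2 : Disjoint R D2 := Finset.disjoint_left.mpr fun x hxR hxD =>
      (Finset.mem_sdiff.mp ((Finset.mem_powerset.mp h2) hxD)).2 hxR
    calc D1 = (R ∪ D1) \ R := by rw [Finset.union_sdiff_cancel_left k1]
      _ = (R ∪ D2) \ R := by rw [show R ∪ D1 = R ∪ D2 from heq]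
      _ = D2 := Finset.union_sdiff_cancel_left k2

lemma sum_neg_one_pow_interval2 (S C : Finset N) (hCS : C ⊆ S) :
    (∑ R ∈ S.powerset.filter (fun R => C ⊆ R), (-1 : ℝ) ^ (R.card - C.card)) =
      if C = S then 1 else 0 := by
  have key : ∀ R ∈ S.powerset.filter (fun R => C ⊆ R),
      (-1 : ℝ) ^ (R.card - C.card)
        = ((-1 : ℝ) ^ C.card * (-1 : ℝ) ^ S.card) * ((-1 : ℝ) ^ (S.card - R.card)) := by
    intro R hR
    simp only [Finset.mem_filter, Finset.mem_powerset] at hR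
    rw [neg1_sub (Finset.card_le_card hR.2), neg1_sub (Finset.card_le_card hR.1)]
    have h2 : (-1 : ℝ) ^ S.card * (-1 : ℝ) ^ S.card = 1 := by
      rw [← pow_add]; exact Even.neg_one_pow ⟨S.card, rfl⟩
    linear_combination (-((-1 : ℝ) ^ C.card * (-1 : ℝ) ^ R.card)) * h2
  rw [Finset.sum_congr rfl key, ← Finset.mul_sum, sum_neg_one_pow_interval S C hCS]
  by_cases h : C = S
  · subst h
    simp only [if_true, mul_one, ← pow_add]
    exact Even.neg_one_pow ⟨C.card, rfl⟩
  · simp [h]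

/-- Möbius inversion: `f` is recovered from `nu`. -/
lemma sum_nu_eq (f : N → Finset N → ℝ) (hdist : DistRule f) (i : N) (S : Finset N) :
    ∑ R ∈ S.powerset, nu f i R = f i S := by
  have h1 : ∀ R ∈ S.powerset, nu f i R
      = ∑ C ∈ S.powerset, (if C ⊆ R ∧ i ∈ C then (-1:ℝ)^(R.card - C.card) * f i C else 0) := by
    intro R hR
    rw [Finset.mem_powerset] at hR
    have hset : R.powerset.filter (fun C => i ∈ C)
        = S.powerset.filter (fun C => C ⊆ R ∧ i ∈ C) := by
      ext C
      simp only [Finset.mem_filter, Finset.mem_powerset]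
      exact ⟨fun h => ⟨h.1.trans hR, h.1, h.2⟩, fun h => ⟨h.2.1, h.2.2⟩⟩
    rw [nu, hset, Finset.sum_filter]
  rw [Finset.sum_congr rfl h1, Finset.sum_comm]
  have h2 : ∀ C ∈ S.powerset,
      (∑ R ∈ S.powerset, if C ⊆ R ∧ i ∈ C then (-1:ℝ)^(R.card - C.card) * f i C else 0)
      = if i ∈ C then (if C = S then 1 else 0) * f i C else 0 := by
    intro C hC
    rw [Finset.mem_powerset] at hC
    by_cases hiC : i ∈ C
    · simp only [hiC, and_true, if_true]
      rw [← Finset.sum_filter, ← Finset.sum_mul, sum_neg_one_pow_interval2 S C hC]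
    · simp [hiC]
  rw [Finset.sum_congr rfl h2]
  rw [Finset.sum_eq_single_of_mem S (Finset.mem_powerset_self S)
    (by
      intro C hC hCS
      simp [hCS])]
  by_cases hiS : i ∈ S
  · simp [hiS]
  · simp [hiS, hdist i S hiS]

/-- Budget balance transfers to the Möbius transforms. -/
lemma sum_nu_members (W : Finset N → ℝ) (f : N → Finset N → ℝ)
    (hW0 : W ∅ = 0) (hbb : BudgetBalanced W f) (S : Finset N) :
    ∑ i ∈ S, nu f i S = coeff W S := by
  have h1 : ∀ i ∈ S, nu f i S
      = ∑ R ∈ S.powerset, (if i ∈ R then (-1:ℝ)^(S.card - R.card) * f i R else 0) := by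
    intro i _
    rw [nu, Finset.sum_filter]
  rw [Finset.sum_congr rfl h1, Finset.sum_comm, coeff]
  refine Finset.sum_congr rfl ?_
  intro R hR
  rw [Finset.mem_powerset] at hR
  have hfil : S.filter (fun i => i ∈ R) = R := by
    ext i
    simp only [Finset.mem_filter]
    exact ⟨fun h => h.2, fun h => ⟨hR h, h⟩⟩
  rw [← Finset.sum_filter, hfil, ← Finset.mul_sum, hbb R]

/-- The pairwise form of `nu`. -/
lemma nu_eq_pair (f : N → Finset N → ℝ) {u v : N} {S : Finset N}
    (hu : u ∈ S) (hv : v ∈ S) (huv : u ≠ v) :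
    nu f u S = ∑ C ∈ S.powerset.filter (fun C => u ∈ C ∧ v ∈ C),
      (-1 : ℝ) ^ (S.card - C.card) * (f u C - f u (C.erase v)) := by
  have hsplit : nu f u S
      = (∑ C ∈ S.powerset.filter (fun C => u ∈ C ∧ v ∈ C),
          (-1 : ℝ) ^ (S.card - C.card) * f u C)
        + (∑ C ∈ S.powerset.filter (fun C => u ∈ C ∧ v ∉ C),
          (-1 : ℝ) ^ (S.card - C.card) * f u C) := by
    rw [nu]
    rw [← Finset.sum_filter_add_sum_filter_not (S.powerset.filter (fun R => u ∈ R))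
      (fun C => v ∈ C)]
    congr 1
    · congr 1
      ext C
      simp only [Finset.mem_filter, Finset.mem_powerset]
      tauto
    · congr 1
      ext C
      simp only [Finset.mem_filter, Finset.mem_powerset]
      tauto
  have hbij : (∑ C ∈ S.powerset.filter (fun C => u ∈ C ∧ v ∉ C),
        (-1 : ℝ) ^ (S.card - C.card) * f u C)
      = ∑ C ∈ S.powerset.filter (fun C => u ∈ C ∧ v ∈ C),
        (-1 : ℝ) ^ (S.card - C.card) * (- f u (C.erase v)) := by
    refine Finset.sum_nbij' (fun C => insert v C) (fun C => C.erase v) ?_ ?_ ?_ ?_ ?_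
    · intro C hC
      simp only [Finset.mem_filter, Finset.mem_powerset] at hC ⊢
      exact ⟨Finset.insert_subset hv hC.1, Finset.mem_insert_of_mem hC.2.1,
        Finset.mem_insert_self v C⟩
    · intro C hC
      simp only [Finset.mem_filter, Finset.mem_powerset] at hC ⊢
      refine ⟨(Finset.erase_subset v C).trans hC.1,
        Finset.mem_erase.mpr ⟨huv, hC.2.1⟩, ?_⟩
      intro h
      exact (Finset.mem_erase.mp h).1 rfl
    · intro C hC
      simp only [Finset.mem_filter, Finset.mem_powerset] at hC
      exact Finset.erase_insert hC.2.2
    · intro C hC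
      simp only [Finset.mem_filter, Finset.mem_powerset] at hC
      exact Finset.insert_erase hC.2.2
    · intro C hC
      simp only [Finset.mem_filter, Finset.mem_powerset] at hC
      have hCS : C ⊆ S := hC.1
      have hvC : v ∉ C := hC.2.2
      have hcardins : (insert v C).card = C.card + 1 := Finset.card_insert_of_notMem hvC
      have herase : (insert v C).erase v = C := Finset.erase_insert hvC
      rw [herase, hcardins]
      have hle : C.card + 1 ≤ S.card := by
        have : insert v C ⊆ S := Finset.insert_subset hv hCS
        simpa [hcardins] using Finset.card_le_card this
      have hle2 : C.card ≤ S.card := Nat.le_of_succ_le hle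
      rw [neg1_sub hle, neg1_sub hle2, pow_succ]
      ring
  rw [hsplit, hbij, ← Finset.sum_add_distrib]
  refine Finset.sum_congr rfl ?_
  intro C hC
  ring

/-! ### The parity gadget -/

def gadgetCset (u v : N) (S₀ : Finset N) : Finset (Finset N) :=
  S₀.powerset.filter (fun C => u ∈ C ∧ v ∈ C)

def gadgetSig (S₀ C : Finset N) (b : Bool) : Bool :=
  if Even (S₀.card - C.card) then b else !b

noncomputable def gadgetUAct (u v : N) (S₀ : Finset N) (a : Bool) :
    Finset (Finset N × Bool) := (gadgetCset u v S₀).image (fun C => (C, a))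

noncomputable def gadgetVAct (u v : N) (S₀ : Finset N) (b : Bool) :
    Finset (Finset N × Bool) := (gadgetCset u v S₀).image (fun C => (C, gadgetSig S₀ C b))

noncomputable def gadgetFAct (u v : N) (S₀ : Finset N) (w : N) :
    Finset (Finset N × Bool) :=
  ((gadgetCset u v S₀).filter (fun C => w ∈ C)) ×ˢ (Finset.univ : Finset Bool)

noncomputable def gadgetGame (u v : N) (S₀ : Finset N) (W : Finset N → ℝ) : Game N where
  R := Finset N × Bool
  act := fun i =>
    if i = u then {gadgetUAct u v S₀ false, gadgetUAct u v S₀ true}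
    else if i = v then {gadgetVAct u v S₀ false, gadgetVAct u v S₀ true}
    else if i ∈ S₀ then {gadgetFAct u v S₀ i} else {(∅ : Finset (Finset N × Bool))}
  act_nonempty := by
    intro i
    split_ifs <;> simp
  Wr := fun _ => W

attribute [reducible] gadgetGame

lemma mem_gadgetUAct {u v : N} {S₀ : Finset N} {a : Bool} {C : Finset N} {k : Bool} :
    (C, k) ∈ gadgetUAct u v S₀ a ↔ C ∈ gadgetCset u v S₀ ∧ k = a := by
  simp only [gadgetUAct, Finset.mem_image, Prod.mk.injEq]
  constructor
  · rintro ⟨C', hC', rfl, rfl⟩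
    exact ⟨hC', rfl⟩
  · rintro ⟨hC, rfl⟩
    exact ⟨C, hC, rfl, rfl⟩

lemma mem_gadgetVAct {u v : N} {S₀ : Finset N} {b : Bool} {C : Finset N} {k : Bool} :
    (C, k) ∈ gadgetVAct u v S₀ b ↔ C ∈ gadgetCset u v S₀ ∧ k = gadgetSig S₀ C b := by
  simp only [gadgetVAct, Finset.mem_image, Prod.mk.injEq]
  constructor
  · rintro ⟨C', hC', rfl, rfl⟩
    exact ⟨hC', rfl⟩
  · rintro ⟨hC, rfl⟩
    exact ⟨C, hC, rfl, rfl⟩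

lemma mem_gadgetFAct {u v : N} {S₀ : Finset N} {w : N} {C : Finset N} {k : Bool} :
    (C, k) ∈ gadgetFAct u v S₀ w ↔ C ∈ gadgetCset u v S₀ ∧ w ∈ C := by
  simp [gadgetFAct, Finset.mem_product, Finset.mem_filter, and_assoc]

lemma gadgetSig_not (S₀ C : Finset N) (b : Bool) :
    gadgetSig S₀ C (!b) = !(gadgetSig S₀ C b) := by
  unfold gadgetSig
  by_cases he : Even (S₀.card - C.card) <;> simp [he]

lemma bool_sign (au bv : Bool) (e : Prop) [Decidable e] (x y : ℝ) :
    ((if (!au) = (if e then bv else !bv) then x else y)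
      - (if au = (if e then bv else !bv) then x else y))
    = (if au = bv then (-1:ℝ) else 1) * ((if e then (1:ℝ) else -1) * (x - y)) := by
  cases au <;> cases bv <;> by_cases he : e <;> simp [he] <;> ring

lemma bool_sign2 (au bv : Bool) (e : Prop) [Decidable e] (x y : ℝ) :
    ((if au = (if e then (!bv) else !(!bv)) then x else y)
      - (if au = (if e then bv else !bv) then x else y))
    = (if au = bv then (-1:ℝ) else 1) * ((if e then (1:ℝ) else -1) * (x - y)) := by
  cases au <;> cases bv <;> by_cases he : e <;> simp [he] <;> ring

lemma neg_one_pow_ite (n : ℕ) :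
    (-1 : ℝ) ^ n = if Even n then (1:ℝ) else -1 := by
  by_cases he : Even n
  · simp [he, Even.neg_one_pow]
  · simp [he, Odd.neg_one_pow (Nat.not_even_iff_odd.mp he)]

/-- **The parity gadget.** -/
lemma alignment (W : Finset N → ℝ) (f : N → Finset N → ℝ)
    (hPNE : GuaranteesPNE1 W f) {u v : N} {S : Finset N}
    (hu : u ∈ S) (hv : v ∈ S) (huv : u ≠ v) :
    ¬ (nu f u S < 0 ∧ 0 < nu f v S) := by
  rintro ⟨hneg, hpos⟩
  classical
  obtain ⟨a, hact, hbest⟩ := hPNE (gadgetGame u v S W) (fun _ => rfl)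
  -- decode the equilibrium actions
  obtain ⟨au, hua⟩ : ∃ z : Bool, a u = gadgetUAct u v S z := by
    have h := hact u
    rw [show (gadgetGame u v S W).act u
        = {gadgetUAct u v S false, gadgetUAct u v S true} from by
      simp [gadgetGame]] at h
    rcases Finset.mem_insert.mp h with h | h
    · exact ⟨false, h⟩
    · exact ⟨true, Finset.mem_singleton.mp h⟩
  obtain ⟨bv, hva⟩ : ∃ z : Bool, a v = gadgetVAct u v S z := by
    have h := hact v
    rw [show (gadgetGame u v S W).act v
        = {gadgetVAct u v S false, gadgetVAct u v S true} from by
      simp [gadgetGame, Ne.symm huv]] at h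
    rcases Finset.mem_insert.mp h with h | h
    · exact ⟨false, h⟩
    · exact ⟨true, Finset.mem_singleton.mp h⟩
  have hfill : ∀ w, w ≠ u → w ≠ v → w ∈ S → a w = gadgetFAct u v S w := by
    intro w h1 h2 h3
    have h := hact w
    simp only [gadgetGame, if_neg h1, if_neg h2, if_pos h3, Finset.mem_singleton] at h
    exact h
  have hout : ∀ w, w ≠ u → w ≠ v → w ∉ S → a w = ∅ := by
    intro w h1 h2 h3
    have h := hact w
    simp only [gadgetGame, if_neg h1, if_neg h2, if_neg h3, Finset.mem_singleton] at h
    exact h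
  -- utility computations for u
  have hutilU : ∀ (x : Bool) (prof : N → Finset (Finset N × Bool)),
      prof u = gadgetUAct u v S x → prof v = gadgetVAct u v S bv →
      (∀ w, w ≠ u → w ≠ v → prof w = a w) →
      utility (gadgetGame u v S W) (fun _ => f) prof u
        = ∑ C ∈ gadgetCset u v S, f u (if x = gadgetSig S C bv then C else C.erase v) := by
    intro x prof hpu hpv hpw
    unfold utility
    rw [hpu, gadgetUAct, Finset.sum_image (by
      intro C1 _ C2 _ h
      exact (Prod.mk.injEq _ _ _ _).mp h |>.1)]
    refine Finset.sum_congr rfl ?_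
    intro C hC
    have hCmem := hC
    simp only [gadgetCset, Finset.mem_filter, Finset.mem_powerset] at hCmem
    obtain ⟨hCS, hCu, hCv⟩ := hCmem
    refine congrArg (f u) ?_
    ext j
    simp only [playersAt, Finset.mem_filter, Finset.mem_univ, true_and]
    by_cases hju : j = u
    · subst hju
      rw [hpu, mem_gadgetUAct]
      simp only [hC, true_and]
      by_cases hcond : x = gadgetSig S C bv <;>
        simp [hcond, hCu, Finset.mem_erase, huv]
    · by_cases hjv : j = v
      · subst hjv
        rw [hpv, mem_gadgetVAct]
        simp only [hC, true_and]
        by_cases hcond : x = gadgetSig S C bv <;> simp [hcond, hCv, Finset.mem_erase]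
      · rw [hpw j hju hjv]
        by_cases hjS : j ∈ S
        · rw [hfill j hju hjv hjS, mem_gadgetFAct]
          simp only [hC, true_and]
          by_cases hcond : x = gadgetSig S C bv <;>
            simp [hcond, Finset.mem_erase, hjv]
        · rw [hout j hju hjv hjS]
          have hjC : j ∉ C := fun h => hjS (hCS h)
          by_cases hcond : x = gadgetSig S C bv <;>
            simp [hcond, hjC, Finset.mem_erase]
  -- utility computations for v
  have hutilV : ∀ (y : Bool) (prof : N → Finset (Finset N × Bool)),
      prof u = gadgetUAct u v S au → prof v = gadgetVAct u v S y →
      (∀ w, w ≠ u → w ≠ v → prof w = a w) →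
      utility (gadgetGame u v S W) (fun _ => f) prof v
        = ∑ C ∈ gadgetCset u v S, f v (if au = gadgetSig S C y then C else C.erase u) := by
    intro y prof hpu hpv hpw
    unfold utility
    rw [hpv, gadgetVAct, Finset.sum_image (by
      intro C1 _ C2 _ h
      exact (Prod.mk.injEq _ _ _ _).mp h |>.1)]
    refine Finset.sum_congr rfl ?_
    intro C hC
    have hCmem := hC
    simp only [gadgetCset, Finset.mem_filter, Finset.mem_powerset] at hCmem
    obtain ⟨hCS, hCu, hCv⟩ := hCmem
    refine congrArg (f v) ?_
    ext j
    simp only [playersAt, Finset.mem_filter, Finset.mem_univ, true_and]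
    by_cases hju : j = u
    · subst hju
      rw [hpu, mem_gadgetUAct]
      simp only [hC, true_and]
      by_cases hcond : au = gadgetSig S C y
      · simp [← hcond, hCu]
      · have hcond' : gadgetSig S C y ≠ au := fun h => hcond h.symm
        simp [hcond, hcond', Finset.mem_erase]
    · by_cases hjv : j = v
      · subst hjv
        rw [hpv, mem_gadgetVAct]
        simp only [hC, true_and]
        by_cases hcond : au = gadgetSig S C y <;>
          simp [hcond, hCv, Finset.mem_erase, Ne.symm huv]
      · rw [hpw j hju hjv]
        by_cases hjS : j ∈ S
        · rw [hfill j hju hjv hjS, mem_gadgetFAct]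
          simp only [hC, true_and]
          by_cases hcond : au = gadgetSig S C y <;>
            simp [hcond, Finset.mem_erase, hju]
        · rw [hout j hju hjv hjS]
          have hjC : j ∉ C := fun h => hjS (hCS h)
          by_cases hcond : au = gadgetSig S C y <;>
            simp [hcond, hjC, Finset.mem_erase]
  -- u's deviation
  have hdevU : utility (gadgetGame u v S W) (fun _ => f)
        (Function.update a u (gadgetUAct u v S (!au))) u
      - utility (gadgetGame u v S W) (fun _ => f) a u
      = (if au = bv then (-1:ℝ) else 1) * nu f u S := by
    rw [hutilU au a hua hva (fun _ _ _ => rfl),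
      hutilU (!au) (Function.update a u (gadgetUAct u v S (!au)))
        (Function.update_self _ _ _)
        (by rw [Function.update_of_ne (Ne.symm huv)]; exact hva)
        (fun w hwu _ => Function.update_of_ne hwu _ _),
      ← Finset.sum_sub_distrib,
      nu_eq_pair f hu hv huv, Finset.mul_sum]
    refine Finset.sum_congr rfl ?_
    intro C hC
    rw [neg_one_pow_ite]
    rw [apply_ite (f u), apply_ite (f u)]
    simp only [gadgetSig]
    exact bool_sign au bv (Even (S.card - C.card)) (f u C) (f u (C.erase v))
  -- v's deviation
  have hdevV : utility (gadgetGame u v S W) (fun _ => f)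
        (Function.update a v (gadgetVAct u v S (!bv))) v
      - utility (gadgetGame u v S W) (fun _ => f) a v
      = (if au = bv then (-1:ℝ) else 1) * nu f v S := by
    rw [hutilV bv a hua hva (fun _ _ _ => rfl),
      hutilV (!bv) (Function.update a v (gadgetVAct u v S (!bv)))
        (by rw [Function.update_of_ne huv]; exact hua)
        (Function.update_self _ _ _)
        (fun w _ hwv => Function.update_of_ne hwv _ _),
      ← Finset.sum_sub_distrib,
      nu_eq_pair f hv hu (Ne.symm huv), Finset.mul_sum]
    rw [show S.powerset.filter (fun C => v ∈ C ∧ u ∈ C) = gadgetCset u v S from by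
      ext C
      simp [gadgetCset, and_comm]]
    refine Finset.sum_congr rfl ?_
    intro C hC
    rw [neg_one_pow_ite]
    rw [apply_ite (f v), apply_ite (f v)]
    simp only [gadgetSig]
    exact bool_sign2 au bv (Even (S.card - C.card)) (f v C) (f v (C.erase u))
  -- apply PNE conditions
  have hmemU : gadgetUAct u v S (!au) ∈ (gadgetGame u v S W).act u := by
    cases au
    · simp only [gadgetGame, if_pos rfl]
      exact Finset.mem_insert_of_mem (Finset.mem_singleton_self _)
    · simp only [gadgetGame, if_pos rfl]
      exact Finset.mem_insert_self _ _
  have hmemV : gadgetVAct u v S (!bv) ∈ (gadgetGame u v S W).act v := by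
    cases bv
    · simp only [gadgetGame, if_neg (Ne.symm huv), if_pos rfl]
      exact Finset.mem_insert_of_mem (Finset.mem_singleton_self _)
    · simp only [gadgetGame, if_neg (Ne.symm huv), if_pos rfl]
      exact Finset.mem_insert_self _ _
  have hU := hbest u _ hmemU
  have hV := hbest v _ hmemV
  by_cases hab : au = bv
  · rw [if_pos hab] at hdevU
    nlinarith
  · rw [if_neg hab] at hdevV
    nlinarith

lemma alignment_mul (W : Finset N → ℝ) (f : N → Finset N → ℝ)
    (hPNE : GuaranteesPNE1 W f) {u v : N} {S : Finset N}
    (hu : u ∈ S) (hv : v ∈ S) (huv : u ≠ v) :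
    0 ≤ nu f u S * nu f v S := by
  rcases le_or_gt 0 (nu f u S) with h1 | h1
  · rcases le_or_gt 0 (nu f v S) with h2 | h2
    · exact mul_nonneg h1 h2
    · rcases eq_or_lt_of_le h1 with h1' | h1'
      · simp [← h1']
      · exact absurd ⟨h2, h1'⟩ (alignment W f hPNE hv hu huv.symm)
  · rcases le_or_gt 0 (nu f v S) with h2 | h2
    · rcases eq_or_lt_of_le h2 with h2' | h2'
      · simp [← h2']
      · exact absurd ⟨h1, h2'⟩ (alignment W f hPNE hu hv huv)
    · nlinarith

/-- Off the support, all Möbius values vanish. -/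
lemma nu_off_supp (W : Finset N → ℝ) (f : N → Finset N → ℝ)
    (hW0 : W ∅ = 0) (hbb : BudgetBalanced W f) (hPNE : GuaranteesPNE1 W f)
    {S : Finset N} (hS : S ∉ supp W) (i : N) : nu f i S = 0 := by
  by_cases hiS : i ∈ S
  · have hq : coeff W S = 0 := by
      by_contra h
      exact hS (by simp [supp, h])
    have hsum : ∑ j ∈ S, nu f j S = 0 := by
      rw [sum_nu_members W f hW0 hbb S, hq]
    by_contra hne
    rcases lt_or_gt_of_ne hne with hneg | hpos
    · have hle : ∀ j ∈ S, nu f j S ≤ (0 : ℝ) := by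
        intro j hj
        by_cases hji : j = i
        · exact hji ▸ hneg.le
        · nlinarith [alignment_mul W f hPNE hiS hj (Ne.symm hji), hneg]
      have : ∑ j ∈ S, nu f j S < ∑ j ∈ S, (0 : ℝ) :=
        Finset.sum_lt_sum hle ⟨i, hiS, by simpa using hneg⟩
      simp only [Finset.sum_const_zero] at this
      exact absurd hsum this.ne
    · have hge : ∀ j ∈ S, (0 : ℝ) ≤ nu f j S := by
        intro j hj
        by_cases hji : j = i
        · exact hji ▸ hpos.le
        · nlinarith [alignment_mul W f hPNE hiS hj (Ne.symm hji), hpos]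
      have : ∑ j ∈ S, (0 : ℝ) < ∑ j ∈ S, nu f j S :=
        Finset.sum_lt_sum hge ⟨i, hiS, by simpa using hpos⟩
      simp only [Finset.sum_const_zero] at this
      exact absurd hsum this.ne'
  · exact nu_eq_zero_of_not_mem f hiS

/-- On the support, all Möbius values share the sign of the coefficient. -/
lemma nu_supp_sign (W : Finset N → ℝ) (f : N → Finset N → ℝ)
    (hW0 : W ∅ = 0) (hbb : BudgetBalanced W f) (hPNE : GuaranteesPNE1 W f)
    {T : Finset N} (hT : T ∈ supp W) (i : N) : 0 ≤ nu f i T / coeff W T := by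
  have hq : coeff W T ≠ 0 := by
    simp only [supp, Finset.mem_filter] at hT
    exact hT.2
  have hsum : ∑ j ∈ T, nu f j T = coeff W T := sum_nu_members W f hW0 hbb T
  by_cases hiT : i ∈ T
  · rcases hq.lt_or_gt with hneg | hpos
    · -- coeff < 0 : show nu f i T ≤ 0
      have hi : nu f i T ≤ 0 := by
        by_contra hc
        push_neg at hc
        have hge : ∀ j ∈ T, (0:ℝ) ≤ nu f j T := by
          intro j hj
          by_cases hji : j = i
          · exact hji ▸ hc.le
          · nlinarith [alignment_mul W f hPNE hiT hj (Ne.symm hji), hc]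
        have : (0:ℝ) ≤ ∑ j ∈ T, nu f j T := Finset.sum_nonneg hge
        nlinarith [hsum]
      exact div_nonneg_of_nonpos hi hneg.le
    · have hi : 0 ≤ nu f i T := by
        by_contra hc
        push_neg at hc
        have hle : ∀ j ∈ T, nu f j T ≤ (0:ℝ) := by
          intro j hj
          by_cases hji : j = i
          · exact hji ▸ hc.le
          · nlinarith [alignment_mul W f hPNE hiT hj (Ne.symm hji), hc]
        have : ∑ j ∈ T, nu f j T ≤ (0:ℝ) := Finset.sum_nonpos hle
        nlinarith [hsum]
      exact div_nonneg hi hpos.le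
  · rw [nu_eq_zero_of_not_mem f hiT, zero_div]

/-- The recursive basis rule is the normalized Möbius transform. -/
lemma basisRule_eq_nu (W : Finset N → ℝ) (f : N → Finset N → ℝ)
    (hW0 : W ∅ = 0) (hdist : DistRule f) (hbb : BudgetBalanced W f)
    (hPNE : GuaranteesPNE1 W f) :
    ∀ T ∈ supp W, ∀ (i : N) (S : Finset N),
      basisRule W f T i S = if T ⊆ S then nu f i T / coeff W T else 0 := by
  intro T
  induction T using Finset.strongInduction with
  | _ T ih =>
    intro hT i S
    rw [basisRule]
    by_cases hTS : T ⊆ S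
    · simp only [hTS, if_true]
      have hrec : ∑ T' ∈ ((suppIn W T).erase T).attach,
          coeff W T'.1 * basisRule W f T'.1 i S
          = ∑ T' ∈ (suppIn W T).erase T, nu f i T' := by
        rw [← Finset.sum_attach ((suppIn W T).erase T) (fun T' => nu f i T')]
        refine Finset.sum_congr rfl ?_
        intro T' _
        have hmem := T'.2
        simp only [Finset.mem_erase, suppIn, Finset.mem_filter] at hmem
        have hss : T'.1 ⊂ T := Finset.ssubset_iff_subset_ne.mpr ⟨hmem.2.2, hmem.1⟩
        have hq' : coeff W T'.1 ≠ 0 := by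
          have := hmem.2.1
          simp only [supp, Finset.mem_filter] at this
          exact this.2
        rw [ih T'.1 hss hmem.2.1 i S, if_pos (hmem.2.2.trans hTS)]
        field_simp
      rw [hrec]
      have hf : f i T = ∑ T' ∈ suppIn W T, nu f i T' := by
        rw [← sum_nu_eq f hdist i T]
        have hsub : suppIn W T ⊆ T.powerset := by
          intro R hR
          simp only [suppIn, Finset.mem_filter] at hR
          exact Finset.mem_powerset.mpr hR.2
        rw [← Finset.sum_subset hsub ?_]
        intro R hR hR2
        refine nu_off_supp W f hW0 hbb hPNE ?_ i
        simp only [suppIn, Finset.mem_filter] at hR2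
        intro hsupp
        exact hR2 ⟨hsupp, Finset.mem_powerset.mp hR⟩
      have hTmem : T ∈ suppIn W T := by
        simp only [suppIn, Finset.mem_filter]
        exact ⟨hT, Finset.Subset.refl T⟩
      rw [hf, ← Finset.add_sum_erase _ _ hTmem]
      rw [add_sub_cancel_right, one_div, inv_mul_eq_div]
    · simp [hTS]

lemma WeightSystem.idx_eq (ω : WeightSystem N) {i : N} {k : Fin ω.m}
    (h : i ∈ ω.part k) : ω.idx i = k := by
  have hs := (ω.part_covers i).choose_spec
  by_contra hne
  exact Finset.disjoint_left.mp (ω.part_disjoint _ _ hne) hs h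

/-- Final assembly: from the normalized Möbius description to a weight system. -/
lemma build_ws (W : Finset N → ℝ) (f : N → Finset N → ℝ)
    (hW0 : W ∅ = 0) (hdist : DistRule f) (hbb : BudgetBalanced W f)
    (hPNE : GuaranteesPNE1 W f) {T : Finset N} (hT : T ∈ supp W) :
    ∃ ω : WeightSystem N,
      (∀ (i : N) (S : Finset N), basisRule W f T i S = fGWSVbasis ω T i S) ∧
      ∀ (i : N) (S : Finset N), 0 ≤ basisRule W f T i S := by
  classical
  set q := coeff W T with hqdef
  have hq : q ≠ 0 := by
    simp only [supp, Finset.mem_filter] at hT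
    exact hT.2
  have hb := basisRule_eq_nu W f hW0 hdist hbb hPNE T hT
  have hnn : ∀ i, 0 ≤ nu f i T / q := fun i => nu_supp_sign W f hW0 hbb hPNE hT i
  have hsum1 : ∑ i ∈ T, nu f i T / q = 1 := by
    rw [← Finset.sum_div, sum_nu_members W f hW0 hbb T, ← hqdef, div_self hq]
  set B := T.filter (fun i => nu f i T / q ≠ 0) with hBdef
  have hBsub : B ⊆ T := Finset.filter_subset _ _
  have hBsum : ∑ i ∈ B, nu f i T / q = 1 := by
    rw [hBdef, Finset.sum_filter_ne_zero, hsum1]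
  have hBne : B.Nonempty := by
    rcases Finset.eq_empty_or_nonempty B with h | h
    · rw [h] at hBsum
      simp at hBsum
    · exact h
  have hBpos : ∀ i ∈ B, 0 < nu f i T / q := by
    intro i hi
    simp only [hBdef, Finset.mem_filter] at hi
    exact (hnn i).lt_of_ne (Ne.symm hi.2)
  have hzero : ∀ i, i ∉ B → nu f i T / q = 0 := by
    intro i hi
    by_cases hiT : i ∈ T
    · by_contra h
      exact hi (Finset.mem_filter.mpr ⟨hiT, h⟩)
    · rw [nu_eq_zero_of_not_mem f hiT, zero_div]
  -- weight system
  obtain ⟨b0, hb0⟩ := hBne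
  by_cases hBu : B = Finset.univ
  · refine ⟨{ lam := fun i => nu f i T / q
              lam_pos := fun i => hBpos i (hBu ▸ Finset.mem_univ i)
              m := 1
              part := fun _ => Finset.univ
              part_nonempty := fun _ => ⟨b0, Finset.mem_univ b0⟩
              part_disjoint := fun k l hkl => absurd (Subsingleton.elim k l) hkl
              part_covers := fun i => ⟨0, Finset.mem_univ i⟩ }, ?_, ?_⟩
    · intro i S
      rw [hb i S, fGWSVbasis]
      simp only [WeightSystem.bar]
      rw [Finset.filter_true_of_mem (fun i _ j _ => le_of_eq (Subsingleton.elim _ _))]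
      by_cases hTS : T ⊆ S
      · by_cases hiT : i ∈ T
        · simp only [hiT, hTS, and_true, if_true, if_pos, hsum1, div_one, ← hqdef]
        · simp only [hiT, hTS, and_true, false_and, if_false, if_true]
          rw [nu_eq_zero_of_not_mem f hiT, zero_div]
      · simp [hTS]
    · intro i S
      rw [hb i S]
      by_cases hTS : T ⊆ S
      · simpa [hTS] using hnn i
      · simp [hTS]
  · have hBc : (Finset.univ \ B).Nonempty := Finset.sdiff_nonempty.mpr (by
      intro h
      exact hBu (Finset.Subset.antisymm (Finset.subset_univ B) h))
    have hlampos : ∀ i : N, 0 < (if i ∈ B then nu f i T / q else 1) := by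
      intro i
      by_cases hi : i ∈ B
      · simpa [hi] using hBpos i hi
      · simp [hi]
    have hpne : ∀ k : Fin 2, (![B, Finset.univ \ B] k).Nonempty := by
      intro k
      fin_cases k
      · exact ⟨b0, hb0⟩
      · exact hBc
    have hpd : ∀ k l : Fin 2, k ≠ l →
        Disjoint (![B, Finset.univ \ B] k) (![B, Finset.univ \ B] l) := by
      intro k l hkl
      fin_cases k <;> fin_cases l <;>
        simp_all [Finset.disjoint_sdiff, Finset.sdiff_disjoint]
    have hpc : ∀ i : N, ∃ k : Fin 2, i ∈ ![B, Finset.univ \ B] k := by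
      intro i
      by_cases hi : i ∈ B
      · exact ⟨0, by simpa using hi⟩
      · exact ⟨1, by simp [hi]⟩
    set ω : WeightSystem N :=
      ⟨fun i => if i ∈ B then nu f i T / q else 1, hlampos, 2, ![B, Finset.univ \ B],
        hpne, hpd, hpc⟩ with hω
    have hidx0 : ∀ j ∈ B, ω.idx j = 0 := by
      intro j hj
      exact ω.idx_eq (k := 0) (by show j ∈ ![B, Finset.univ \ B] 0; simpa using hj)
    have hidx1 : ∀ j, j ∉ B → ω.idx j = 1 := by
      intro j hj
      exact ω.idx_eq (k := 1) (by show j ∈ ![B, Finset.univ \ B] 1; simp [hj])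
    have hbar : ω.bar T = B := by
      rw [WeightSystem.bar]
      ext j
      simp only [Finset.mem_filter]
      constructor
      · rintro ⟨hjT, hle⟩
        by_contra hjB
        have h1 := hle b0 (hBsub hb0)
        rw [hidx0 b0 hb0, hidx1 j hjB] at h1
        exact absurd h1 (by show ¬ ((1 : Fin 2) ≤ 0); decide)
      · intro hjB
        refine ⟨hBsub hjB, ?_⟩
        intro j' _
        rw [hidx0 j hjB]
        exact Fin.zero_le _
    have hlsum : ∑ j ∈ ω.bar T, ω.lam j = 1 := by
      rw [hbar, ← hBsum]
      refine Finset.sum_congr rfl ?_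
      intro j hj
      simp [hω, hj]
    refine ⟨ω, ?_, ?_⟩
    · intro i S
      rw [hb i S, fGWSVbasis, hlsum, hbar]
      by_cases hTS : T ⊆ S
      · by_cases hiB : i ∈ B
        · simp [hiB, hTS, hω, ← hqdef]
        · simp only [hiB, hTS, and_true, false_and, if_false, if_true]
          exact hzero i hiB
      · simp [hTS]
    · intro i S
      rw [hb i S]
      by_cases hTS : T ⊆ S
      · simpa [hTS] using hnn i
      · simp [hTS]

end AuxDev

/-- **Lemma 4.3.** If `f` is a budget-balanced distribution rule for
`W = (𝒯, Q)` guaranteeing a pure Nash equilibrium in all games in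
`G(N, f, W)`, then each recursively defined basis distribution rule `f^T`
equals `f^T_{GWSV}[ω^T]` for some weight system `ω^T`; in particular each
`f^T` is nonnegative. -/
theorem basisRule_is_gwsv (N : Type) [Fintype N] [DecidableEq N]
    (hN : 1 < Fintype.card N)
    (W : Finset N → ℝ) (f : N → Finset N → ℝ)
    (hW0 : W ∅ = 0) (hdist : DistRule f) (hbb : BudgetBalanced W f)
    (hPNE : GuaranteesPNE1 W f) :
    ∀ T ∈ supp W, ∃ ω : WeightSystem N,
      (∀ (i : N) (S : Finset N), basisRule W f T i S = fGWSVbasis ω T i S) ∧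
      ∀ (i : N) (S : Finset N), 0 ≤ basisRule W f T i S := by
  intro T hT
  exact build_ws W f hW0 hdist hbb hPNE hT

end CostSharing
end
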